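/- arXiv:1605.06478 — 8 statements merged into one kernel-verified Lean document; each statement's English description precedes it below -/
import Mathlib

section
/- If μ : ℕ → ℝ is a nondecreasing sequence with μ_{k+1} - μ_k nonincreasing in k, then the function V_n(c) := ∑_{k=c}^{n-1} μ_k · (c-1)/((k-1)k) + (c-1)/(n-1) · μ_1 is concave in c; more precisely V_n(c+2) - 2V_n(c+1) + V_n(c) = -(μ_{c+1} - μ_c)/c ≤ 0 for 2 ≤ c ≤ n-2. -/
theorem Vn_concave (n : ℕ) (hn : 4 ≤ n) (μ : ℕ → ℝ)
    (hmono : ∀ k, μ k ≤ μ (k + 1))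
    (V : ℕ → ℝ)
    (hV : ∀ c, V c = (∑ k ∈ Finset.Icc c (n - 1),
        μ k * ((c : ℝ) - 1) / (((k : ℝ) - 1) * k)) + ((c : ℝ) - 1) / ((n : ℝ) - 1) * μ 1) :
    ∀ c : ℕ, 2 ≤ c → c ≤ n - 2 →
      V (c + 2) - 2 * V (c + 1) + V c = -(μ (c + 1) - μ c) / c ∧
      V (c + 2) - 2 * V (c + 1) + V c ≤ 0 := by
  intro c hc hcn
  have hcR : (2:ℝ) ≤ (c:ℝ) := by exact_mod_cast hc
  have hc0 : (c:ℝ) ≠ 0 := by linarith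
  have hc1 : (c:ℝ) - 1 ≠ 0 := by linarith [hcR]; 
  have hc2 : (c:ℝ) + 1 ≠ 0 := by linarith
  have hnR : (4:ℝ) ≤ (n:ℝ) := by exact_mod_cast hn
  have hn1 : (n:ℝ) - 1 ≠ 0 := by linarith
  have h1 : Finset.Icc c (n-1) = insert c (Finset.Icc (c+1) (n-1)) := by
    ext x; simp [Finset.mem_Icc, Finset.mem_insert]; omega
  have h2 : Finset.Icc (c+1) (n-1) = insert (c+1) (Finset.Icc (c+2) (n-1)) := by
    ext x; simp [Finset.mem_Icc, Finset.mem_insert]; omega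
  have ha : c ∉ insert (c+1) (Finset.Icc (c+2) (n-1)) := by
    simp [Finset.mem_Icc]
  have hb : c + 1 ∉ Finset.Icc (c+2) (n-1) := by
    simp [Finset.mem_Icc]
  have factor : ∀ x : ℝ, ∀ m : ℕ, ∑ k ∈ Finset.Icc m (n-1),
      μ k * x / (((k : ℝ) - 1) * k) = x * ∑ k ∈ Finset.Icc m (n-1),
      μ k / (((k : ℝ) - 1) * k) := by
    intro x m
    rw [Finset.mul_sum]
    exact Finset.sum_congr rfl fun k _ => by ring
  have key : V (c + 2) - 2 * V (c + 1) + V c = -(μ (c + 1) - μ c) / c := by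
    rw [hV, hV, hV, h1, h2, Finset.sum_insert ha, Finset.sum_insert hb,
      Finset.sum_insert hb, factor, factor, factor]
    push_cast
    simp only [add_sub_cancel_right]
    field_simp
    ring
  refine ⟨key, ?_⟩
  rw [key]
  apply div_nonpos_of_nonpos_of_nonneg
  · linarith [hmono c]
  · positivity
end

section
/- Let μ : ℕ → ℝ be nondecreasing and let ΔV_n(c) := ∑_{k=c}^{n-1} (μ_{k+1} - μ_k)/k - (μ_n - μ_1)/(n-1). If the sequence of differences μ_{k+1} - μ_k is nonincreasing, then ΔV_n(c) ≤ (μ_{c+1} - μ_c)·(∑_{k=c}^{n-1} 1/k - 1). In particular, if ∑_{k=c}^{n-1} 1/k ≤ 1 then ΔV_n(c) ≤ 0. -/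
theorem deltaV_upper_bound (n : ℕ) (μ : ℕ → ℝ)
    (hmono : ∀ k, 1 ≤ k → k ≤ n - 1 → μ k ≤ μ (k + 1))
    (hconc : ∀ k, 1 ≤ k → k ≤ n - 1 → μ (k + 2) - μ (k + 1) ≤ μ (k + 1) - μ k)
    (ΔV : ℕ → ℝ)
    (hΔV : ∀ c, ΔV c = (∑ k ∈ Finset.Icc c (n - 1), (μ (k + 1) - μ k) / k)
        - (μ n - μ 1) / ((n : ℝ) - 1)) :
    ∀ c : ℕ, 1 ≤ c → c ≤ n - 1 →
      ΔV c ≤ (μ (c + 1) - μ c) * ((∑ k ∈ Finset.Icc c (n - 1), (1 : ℝ) / k) - 1) ∧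
      ((∑ k ∈ Finset.Icc c (n - 1), (1 : ℝ) / k) ≤ 1 → ΔV c ≤ 0) := by
  intro c hc1 hc2
  have hn2 : 2 ≤ n := by omega
  set d : ℕ → ℝ := fun k => μ (k + 1) - μ k with hd
  have hnR : (2:ℝ) ≤ (n:ℝ) := by exact_mod_cast hn2
  have hnpos : (0:ℝ) < (n:ℝ) - 1 := by linarith
  have hne : ((n:ℝ) - 1) ≠ 0 := ne_of_gt hnpos
  -- d is nonincreasing on [1, n-1]
  have hdmono : ∀ j k : ℕ, 1 ≤ j → j ≤ k → k ≤ n - 1 → d k ≤ d j := by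
    intro j k hj hjk
    induction k, hjk using Nat.le_induction with
    | base => intro _; exact le_refl _
    | succ m hm ih =>
      intro hk
      have h1 : d (m + 1) ≤ d m := by
        have := hconc m (by omega) (by omega)
        simpa [hd] using this
      exact le_trans h1 (ih (by omega))
  -- telescoping
  have htel : ∑ k ∈ Finset.Icc 1 (n - 1), d k = μ n - μ 1 := by
    have h := Finset.sum_range_sub (fun i => μ (i + 1)) (n - 1)
    rw [show Finset.Icc 1 (n - 1) = Finset.Ico 1 n from by
      ext x; simp [Finset.mem_Icc, Finset.mem_Ico]; omega]
    rw [Finset.sum_Ico_eq_sum_range]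
    calc ∑ i ∈ Finset.range (n - 1), d (1 + i)
        = ∑ i ∈ Finset.range (n - 1), (μ (i + 1 + 1) - μ (i + 1)) := by
          apply Finset.sum_congr rfl
          intro i _
          simp [hd, Nat.add_comm 1 i]
      _ = μ (n - 1 + 1) - μ (0 + 1) := h
      _ = μ n - μ 1 := by rw [show n - 1 + 1 = n from by omega]
  set S := ∑ k ∈ Finset.Icc c (n - 1), (1:ℝ) / k with hS
  set S1 := ∑ k ∈ Finset.Icc c (n - 1), (d k - d c) / k with hS1
  set S3 := ∑ k ∈ Finset.Icc 1 (n - 1), (d k - d c) with hS3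
  -- key inequality
  have key : S1 ≤ S3 / ((n:ℝ) - 1) := by
    have stepA : S1 ≤ (∑ k ∈ Finset.Icc c (n - 1), (d k - d c)) / ((n:ℝ) - 1) := by
      rw [Finset.sum_div]
      apply Finset.sum_le_sum
      intro k hk
      rw [Finset.mem_Icc] at hk
      have hk1 : 1 ≤ k := by omega
      have hkpos : (0:ℝ) < (k:ℝ) := by exact_mod_cast hk1
      have hkle : (k:ℝ) ≤ (n:ℝ) - 1 := by
        have : (k:ℝ) ≤ ((n - 1 : ℕ) : ℝ) := by exact_mod_cast hk.2
        rw [Nat.cast_sub (by omega : 1 ≤ n)] at this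
        simpa using this
      have ha : d k - d c ≤ 0 := by
        have := hdmono c k hc1 hk.1 hk.2
        linarith
      have hinv : 1 / ((n:ℝ) - 1) ≤ 1 / (k:ℝ) :=
        one_div_le_one_div_of_le hkpos hkle
      have := mul_le_mul_of_nonpos_left hinv ha
      calc (d k - d c) / k = (d k - d c) * (1 / (k:ℝ)) := by ring
        _ ≤ (d k - d c) * (1 / ((n:ℝ) - 1)) := this
        _ = (d k - d c) / ((n:ℝ) - 1) := by ring
    have stepB : (∑ k ∈ Finset.Icc c (n - 1), (d k - d c)) ≤ S3 := by
      apply Finset.sum_le_sum_of_subset_of_nonneg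
      · apply Finset.Icc_subset_Icc_left
        omega
      · intro i hi hni
        rw [Finset.mem_Icc] at hi
        rw [Finset.mem_Icc] at hni
        have hic : i ≤ c := by omega
        have := hdmono i c hi.1 hic hc2
        linarith
    calc S1 ≤ (∑ k ∈ Finset.Icc c (n - 1), (d k - d c)) / ((n:ℝ) - 1) := stepA
      _ ≤ S3 / ((n:ℝ) - 1) := (div_le_div_iff_of_pos_right hnpos).mpr stepB
  -- rewriting identities
  have e2 : S1 = (∑ k ∈ Finset.Icc c (n - 1), d k / k) - d c * S := by
    rw [hS1, hS, Finset.mul_sum, ← Finset.sum_sub_distrib]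
    apply Finset.sum_congr rfl
    intro k _
    ring
  have e3 : S3 = (μ n - μ 1) - ((n:ℝ) - 1) * d c := by
    rw [hS3, Finset.sum_sub_distrib, htel, Finset.sum_const, Nat.card_Icc]
    rw [show n - 1 + 1 - 1 = n - 1 from by omega]
    rw [nsmul_eq_mul, Nat.cast_sub (by omega : 1 ≤ n)]
    push_cast
    ring
  have e4 : (μ n - μ 1) / ((n:ℝ) - 1) = S3 / ((n:ℝ) - 1) + d c := by
    field_simp
    linarith [e3]
  have hsum : (∑ k ∈ Finset.Icc c (n - 1), (μ (k + 1) - μ k) / k)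
      = ∑ k ∈ Finset.Icc c (n - 1), d k / k := rfl
  have H1 : ΔV c ≤ (μ (c + 1) - μ c) * (S - 1) := by
    rw [hΔV c, hsum, e4]
    have hdc : μ (c + 1) - μ c = d c := rfl
    rw [hdc]
    have : (∑ k ∈ Finset.Icc c (n - 1), d k / k) = S1 + d c * S := by
      linarith [e2]
    rw [this]
    linarith [key]
  refine ⟨H1, fun hSle => le_trans H1 ?_⟩
  have hdc0 : 0 ≤ d c := by
    have := hmono c hc1 hc2
    simp only [hd]
    linarith
  have : S - 1 ≤ 0 := by linarith
  exact mul_nonpos_of_nonneg_of_nonpos hdc0 this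
end

section
/- Let X_1, ..., X_n be exchangeable, integrable real random variables with almost surely distinct values, and set μ_k := E[max(X_1,...,X_k)]. Then the sequence of increments is nonincreasing: μ_{k+2} - μ_{k+1} ≤ μ_{k+1} - μ_k for all 1 ≤ k ≤ n-2. -/
open MeasureTheory

private lemma partialSups_congr' {f g : ℕ → ℝ} :
    ∀ m : ℕ, (∀ i ≤ m, f i = g i) → partialSups f m = partialSups g m := by
  intro m
  induction m with
  | zero => intro h; simp [h 0 le_rfl]
  | succ m ih =>
      intro h
      rw [partialSups_add_one, partialSups_add_one, ih (fun i hi => h i (hi.trans (Nat.le_succ m))),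
        h (m+1) le_rfl]

private lemma sup_sub_anti {a b c : ℝ} (h : b ≤ a) : a ⊔ c - a ≤ b ⊔ c - b := by
  rcases le_total c a with h2 | h2
  · rw [sup_eq_left.mpr h2]
    rcases le_total c b with h1 | h1
    · rw [sup_eq_left.mpr h1]; simp
    · rw [sup_eq_right.mpr h1]; linarith
  · rw [sup_eq_right.mpr h2, sup_eq_right.mpr (h.trans h2)]
    linarith

theorem exchangeable_increments_nonincreasing
    {Ω : Type*} [MeasurableSpace Ω] (P : Measure Ω) [IsProbabilityMeasure P]
    (n : ℕ) (X : ℕ → Ω → ℝ)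
    (hmeas : ∀ i, Measurable (X i))
    (hint : ∀ i, 1 ≤ i → i ≤ n → Integrable (X i) P)
    (hexch : ∀ σ : Equiv.Perm ℕ, (∀ i, ¬(1 ≤ i ∧ i ≤ n) → σ i = i) →
        Measure.map (fun ω => fun i => X (σ i) ω) P = Measure.map (fun ω => fun i => X i ω) P)
    (hdistinct : ∀ i j, 1 ≤ i → i ≤ n → 1 ≤ j → j ≤ n → i ≠ j →
        ∀ᵐ ω ∂P, X i ω ≠ X j ω)
    (μ : ℕ → ℝ)
    (hμ : ∀ k, μ k = ∫ ω, (partialSups (fun i => X (i + 1) ω)) (k - 1) ∂P) :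
    ∀ k, 1 ≤ k → k ≤ n - 2 → μ (k + 2) - μ (k + 1) ≤ μ (k + 1) - μ k := by
  intro k hk1 hk2
  obtain ⟨m, rfl⟩ : ∃ m, k = m + 1 := ⟨k - 1, by omega⟩
  have hn : m + 3 ≤ n := by omega
  set S : ℕ → Ω → ℝ := fun j ω => partialSups (fun i => X (i+1) ω) j with hS
  have hμm : ∀ j, μ (j+1) = ∫ ω, S j ω ∂P := by
    intro j; rw [hμ]; simp [hS]
  have hSmeas : ∀ j, Measurable (S j) := by
    intro j
    induction j with
    | zero => simpa [hS] using hmeas 1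
    | succ j ih =>
        have : S (j+1) = fun ω => S j ω ⊔ X (j+2) ω := by
          funext ω; simp [hS, partialSups_succ]
        rw [this]; exact ih.sup (hmeas _)
  have hSint : ∀ j, j + 1 ≤ n → Integrable (S j) P := by
    intro j
    induction j with
    | zero => intro hj; simpa [hS] using hint 1 le_rfl hj
    | succ j ih =>
        intro hj
        have : S (j+1) = fun ω => S j ω ⊔ X (j+2) ω := by
          funext ω; simp [hS, partialSups_succ]
        rw [this]
        exact (ih (by omega)).sup (hint (j+2) (by omega) hj)
  have e1 : μ (m+1) = ∫ ω, S m ω ∂P := hμm m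
  have e2 : μ (m+1+1) = ∫ ω, S (m+1) ω ∂P := hμm (m+1)
  have e3 : μ (m+1+2) = ∫ ω, S (m+2) ω ∂P := by
    rw [show m+1+2 = (m+2)+1 by ring]; exact hμm (m+2)
  rw [e1, e2, e3]
  have i0 := hSint m (by omega)
  have i1 := hSint (m+1) (by omega)
  have i2 := hSint (m+2) (by omega)
  have iX2 : Integrable (X (m+2)) P := hint (m+2) (by omega) (by omega)
  have iX3 : Integrable (X (m+3)) P := hint (m+3) (by omega) hn
  set T : Ω → ℝ := fun ω => S m ω ⊔ X (m+3) ω with hT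
  have iT : Integrable T P := i0.sup iX3
  rw [← integral_sub i2 i1, ← integral_sub i1 i0]
  have stepA : ∫ ω, (S (m+2) ω - S (m+1) ω) ∂P ≤ ∫ ω, (T ω - S m ω) ∂P := by
    apply integral_mono (i2.sub i1) (iT.sub i0)
    intro ω
    have hsucc : S (m+2) ω = S (m+1) ω ⊔ X (m+3) ω := by
      simp only [hS]; exact partialSups_add_one _ (m+1)
    have hmono : S m ω ≤ S (m+1) ω := by
      simp only [hS]
      exact (partialSups (fun i => X (i+1) ω)).monotone (Nat.le_succ m)
    show S (m+2) ω - S (m+1) ω ≤ T ω - S m ω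
    simp only [hsucc, hT]
    exact sup_sub_anti hmono
  refine stepA.trans (le_of_eq ?_)
  -- now show ∫ (T - S m) = ∫ (S (m+1) - S m) using exchangeability
  rw [integral_sub iT i0, integral_sub i1 i0]
  congr 1
  -- ∫ T = ∫ S (m+1)
  set σ : Equiv.Perm ℕ := Equiv.swap (m+2) (m+3) with hσ
  have hσfix : ∀ i, ¬(1 ≤ i ∧ i ≤ n) → σ i = i := by
    intro i hi
    apply Equiv.swap_apply_of_ne_of_ne
    · rintro rfl; exact hi ⟨by omega, by omega⟩
    · rintro rfl; exact hi ⟨by omega, hn⟩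
  set g : (ℕ → ℝ) → ℝ := fun f => partialSups (fun i => f (i+1)) m ⊔ f (m+3) with hg
  have hgmeas : Measurable g := by
    have : ∀ j : ℕ, Measurable (fun f : ℕ → ℝ => partialSups (fun i => f (i+1)) j) := by
      intro j
      induction j with
      | zero => simpa using measurable_pi_apply 1
      | succ j ih =>
          have : (fun f : ℕ → ℝ => partialSups (fun i => f (i+1)) (j+1))
              = fun f => partialSups (fun i => f (i+1)) j ⊔ f (j+2) := by
            funext f; simp [partialSups_succ]
          rw [this]; exact ih.sup (measurable_pi_apply _)
    exact (this m).sup (measurable_pi_apply _)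
  have hJ : Measurable (fun ω => fun i => X i ω) :=
    measurable_pi_lambda _ (fun i => hmeas i)
  have hJσ : Measurable (fun ω => fun i => X (σ i) ω) :=
    measurable_pi_lambda _ (fun i => hmeas _)
  have key : ∫ ω, g (fun i => X (σ i) ω) ∂P = ∫ ω, g (fun i => X i ω) ∂P := by
    rw [← integral_map hJσ.aemeasurable hgmeas.aestronglyMeasurable,
      ← integral_map hJ.aemeasurable hgmeas.aestronglyMeasurable, hexch σ hσfix]
  have hleft : (fun ω => g (fun i => X (σ i) ω)) = fun ω => S m ω ⊔ X (m+2) ω := by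
    funext ω
    have hfix : ∀ i ≤ m, X (σ (i+1)) ω = X (i+1) ω := by
      intro i hi
      rw [Equiv.swap_apply_of_ne_of_ne (by omega) (by omega)]
    have hswap : σ (m+3) = m+2 := Equiv.swap_apply_right _ _
    simp only [hg, hS]
    rw [hswap, partialSups_congr' m hfix]
  have hright : (fun ω => g (fun i => X i ω)) = T := by
    funext ω; simp [hg, hT, hS]
  have hS1 : ∫ ω, S (m+1) ω ∂P = ∫ ω, (S m ω ⊔ X (m+2) ω) ∂P := by
    have hfun : S (m+1) = fun ω => S m ω ⊔ X (m+2) ω := by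
      funext ω; simp [hS, partialSups_succ]
    rw [hfun]
  rw [hS1]
  calc ∫ ω, T ω ∂P = ∫ ω, g (fun i => X i ω) ∂P := by rw [hright]
    _ = ∫ ω, g (fun i => X (σ i) ω) ∂P := key.symm
    _ = ∫ ω, (S m ω ⊔ X (m+2) ω) ∂P := by rw [hleft]
end

section
/- Under the assumptions of the previous statement (exchangeable, integrable, a.s. distinct random variables with μ_k := E[max(X_1,...,X_k)]), the sequence (μ_k) is completely monotone up to index n: for k + j ≤ n, the j-th forward difference Δ^j μ_k is nonnegative when j is odd and nonpositive when j is even (j ≥ 2). -/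
open MeasureTheory

open Finset in
private lemma aux_neg_pow {j t : ℕ} (h : t ≤ j) : ((-1:ℝ))^(j-t) = (-1)^j * (-1)^t := by
  rw [pow_sub₀ (-1 : ℝ) (by norm_num) h, ← inv_pow]
  norm_num

private lemma fold_max_base (x : ℕ → ℝ) (c a : ℝ) (T : Finset ℕ) :
    T.fold max (max c a) x = max c (T.fold max a x) := by
  induction T using Finset.induction_on with
  | empty => simp
  | insert _ _ h ih =>
    rw [Finset.fold_insert h, Finset.fold_insert h, ih, max_left_comm]

private lemma aux_max_split (a b c : ℝ) :
    max 0 (c - a) = max 0 (c - max a b) + max 0 (min c b - a) := by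
  rcases le_total b a with h|h <;> rcases le_total c b with h2|h2 <;>
    rcases le_total c a with h3|h3 <;>
    simp [max_def, min_def] <;> split_ifs <;> linarith

private lemma aux_alt_sum (x : ℕ → ℝ) {J : Finset ℕ} (hJ : J.Nonempty) :
    ∀ a : ℝ, ∑ T ∈ J.powerset, (-1:ℝ)^T.card * (T.fold max a x)
      = -(max 0 (J.inf' hJ x - a)) := by
  induction hJ using Finset.Nonempty.cons_induction with
  | singleton y =>
    intro a
    rw [show ({y} : Finset ℕ).powerset = {∅, {y}} from rfl,
      Finset.sum_pair (Ne.symm (Finset.singleton_ne_empty y))]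
    simp only [Finset.card_empty, Finset.fold_empty, Finset.card_singleton,
      Finset.inf'_singleton]
    have : ({y} : Finset ℕ).fold max a x = max (x y) a := by
      rw [show ({y} : Finset ℕ) = insert y ∅ from rfl, Finset.fold_insert (by simp)]
      simp
    rw [this]
    rcases le_total (x y) a with h|h <;> simp [max_def] <;> split_ifs <;> linarith
  | cons y s hy hs ih =>
    intro a
    rw [Finset.inf'_cons hs, Finset.cons_eq_insert, Finset.powerset_insert,
      Finset.sum_union, Finset.sum_image]
    · have h1 : ∀ T ∈ s.powerset, (-1:ℝ)^(insert y T).card * ((insert y T).fold max a x)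
          = -((-1:ℝ)^T.card * (T.fold max (max (x y) a) x)) := by
        intro T hT
        have hyT : y ∉ T := fun h => hy (Finset.mem_powerset.mp hT h)
        rw [Finset.card_insert_of_notMem hyT, Finset.fold_insert hyT, fold_max_base]
        ring
      rw [Finset.sum_congr rfl h1, Finset.sum_neg_distrib, ih, ih]
      have := aux_max_split a (x y) (s.inf' hs x)
      have hmin : x y ⊓ s.inf' hs x = min (s.inf' hs x) (x y) := min_comm _ _
      have hmax : max (x y) a = max a (x y) := max_comm _ _
      rw [hmin, hmax]
      simp only [max_def, min_def] at *
      linarith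
    · intro T hT T' hT' hEq
      have h1 : y ∉ T := fun h => hy (Finset.mem_powerset.mp hT h)
      have h2 : y ∉ T' := fun h => hy (Finset.mem_powerset.mp hT' h)
      rw [← Finset.erase_insert h1, ← Finset.erase_insert h2, hEq]
    · rw [Finset.disjoint_left]
      intro T hT hT2
      obtain ⟨T', hT', rfl⟩ := Finset.mem_image.mp hT2
      exact hy (Finset.mem_powerset.mp hT (Finset.mem_insert_self y T'))

private lemma sup'_union_fold (A : Finset ℕ) (hA : A.Nonempty) (f : ℕ → ℝ) (T : Finset ℕ) :
    T.fold max (A.sup' hA f) f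
      = (A ∪ T).sup' (hA.mono Finset.subset_union_left) f := by
  induction T using Finset.induction_on with
  | empty => simp
  | @insert a T ha ih =>
    rw [Finset.fold_insert ha, ih,
      Finset.sup'_congr (hA.mono Finset.subset_union_left)
        (show A ∪ insert a T = insert a (A ∪ T) by rw [Finset.union_insert]) (fun x _ => rfl),
      Finset.sup'_insert (s := A ∪ T) (b := a) (hA.mono Finset.subset_union_left) f]

private lemma exists_perm (n : ℕ) : ∀ (d : ℕ) (S T : Finset ℕ), (S \ T).card = d →
    S ⊆ Finset.Icc 1 n → T ⊆ Finset.Icc 1 n → S.card = T.card →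
    ∃ σ : Equiv.Perm ℕ, (∀ i, i ∉ Finset.Icc 1 n → σ i = i) ∧ S.image σ = T := by
  intro d
  induction d with
  | zero =>
    intro S T h hS hT hc
    have hsub : S ⊆ T := by
      intro z hz
      by_contra hzT
      have : z ∈ S \ T := Finset.mem_sdiff.mpr ⟨hz, hzT⟩
      have := Finset.card_pos.mpr ⟨z, this⟩
      omega
    have hST : S = T := Finset.eq_of_subset_of_card_le hsub (le_of_eq hc.symm)
    exact ⟨1, fun i _ => rfl, by simp [hST]⟩
  | succ d ih =>
    intro S T h hS hT hc
    obtain ⟨a, ha⟩ : (S \ T).Nonempty := Finset.card_pos.mp (by omega)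
    have hTS : (T \ S).Nonempty := by
      apply Finset.card_pos.mp
      have h1 := Finset.card_sdiff_add_card_inter S T
      have h2 := Finset.card_sdiff_add_card_inter T S
      rw [Finset.inter_comm] at h2
      omega
    obtain ⟨b, hb⟩ := hTS
    rw [Finset.mem_sdiff] at ha hb
    have hab : a ≠ b := fun hEq => ha.2 (hEq ▸ hb.1)
    set S' := insert b (S.erase a) with hS'def
    have himg : S.image (Equiv.swap a b) = S' := by
      ext z
      simp only [Finset.mem_image, hS'def, Finset.mem_insert, Finset.mem_erase]
      constructor
      · rintro ⟨w, hw, rfl⟩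
        by_cases hwa : w = a
        · subst hwa; left; rw [Equiv.swap_apply_left]
        · have hwb : w ≠ b := fun hEq => hb.2 (hEq ▸ hw)
          rw [Equiv.swap_apply_of_ne_of_ne hwa hwb]
          exact Or.inr ⟨hwa, hw⟩
      · rintro (rfl | ⟨hza, hz⟩)
        · exact ⟨a, ha.1, Equiv.swap_apply_left _ _⟩
        · have hzb : z ≠ b := fun hEq => hb.2 (hEq ▸ hz)
          exact ⟨z, hz, Equiv.swap_apply_of_ne_of_ne hza hzb⟩
    have hbS : b ∉ S.erase a := fun h' => hb.2 (Finset.mem_of_mem_erase h')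
    have hcard' : S'.card = S.card := by
      rw [hS'def, Finset.card_insert_of_notMem hbS, Finset.card_erase_of_mem ha.1]
      have : 0 < S.card := Finset.card_pos.mpr ⟨a, ha.1⟩
      omega
    have hsub' : S' ⊆ Finset.Icc 1 n := by
      intro z hz
      rw [hS'def, Finset.mem_insert] at hz
      rcases hz with rfl | hz
      · exact hT hb.1
      · exact hS (Finset.mem_of_mem_erase hz)
    have hsd : S' \ T = (S \ T).erase a := by
      ext z
      simp only [hS'def, Finset.mem_sdiff, Finset.mem_insert, Finset.mem_erase]
      constructor
      · rintro ⟨rfl | ⟨hza, hz⟩, hzT⟩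
        · exact absurd hb.1 hzT
        · exact ⟨hza, hz, hzT⟩
      · rintro ⟨hza, hz, hzT⟩
        exact ⟨Or.inr ⟨hza, hz⟩, hzT⟩
    have hsdcard : (S' \ T).card = d := by
      rw [hsd, Finset.card_erase_of_mem (Finset.mem_sdiff.mpr ha)]
      omega
    obtain ⟨σ', hσ'fix, hσ'img⟩ := ih S' T hsdcard hsub' hT (by omega)
    refine ⟨(Equiv.swap a b).trans σ', ?_, ?_⟩
    · intro i hi
      have hia : i ≠ a := fun hEq => hi (hS (hEq ▸ ha.1))
      have hib : i ≠ b := fun hEq => hi (hT (hEq ▸ hb.1))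
      simp only [Equiv.trans_apply, Equiv.swap_apply_of_ne_of_ne hia hib]
      exact hσ'fix i hi
    · rw [show ⇑((Equiv.swap a b).trans σ') = ⇑σ' ∘ ⇑(Equiv.swap a b) from rfl,
        ← Finset.image_image, himg, hσ'img]

open Finset in
theorem complete_monotonicity_expected_max
    {Ω : Type*} [MeasurableSpace Ω] (P : Measure Ω) [IsProbabilityMeasure P]
    (n : ℕ) (X : ℕ → Ω → ℝ)
    (hmeas : ∀ i, Measurable (X i))
    (hint : ∀ i, 1 ≤ i → i ≤ n → Integrable (X i) P)
    (hexch : ∀ σ : Equiv.Perm ℕ, (∀ i, ¬(1 ≤ i ∧ i ≤ n) → σ i = i) →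
        Measure.map (fun ω => fun i => X (σ i) ω) P = Measure.map (fun ω => fun i => X i ω) P)
    (hdistinct : ∀ i j, 1 ≤ i → i ≤ n → 1 ≤ j → j ≤ n → i ≠ j →
        ∀ᵐ ω ∂P, X i ω ≠ X j ω)
    (μ : ℕ → ℝ)
    (hμ : ∀ k, μ k = ∫ ω, (partialSups (fun i => X (i + 1) ω)) (k - 1) ∂P) :
    ∀ k j : ℕ, 1 ≤ k → k + j ≤ n →
      (Odd j →
        0 ≤ ∑ i ∈ Finset.range (j + 1), (-1 : ℝ) ^ (j - i) * (j.choose i) * μ (k + i)) ∧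
      (Even j → 2 ≤ j →
        ∑ i ∈ Finset.range (j + 1), (-1 : ℝ) ^ (j - i) * (j.choose i) * μ (k + i) ≤ 0) := by
  classical
  intro k j hk hkj
  by_cases hj1 : 1 ≤ j
  swap
  · have hj0 : j = 0 := by omega
    subst hj0
    exact ⟨fun hodd => absurd hodd (by simp), fun _ h2 => by omega⟩
  set A : Finset ℕ := Finset.Icc 1 k with hA
  set J : Finset ℕ := Finset.Icc (k+1) (k+j) with hJdef
  have hAne : A.Nonempty := by rw [hA, Finset.nonempty_Icc]; omega
  have hJne : J.Nonempty := by rw [hJdef, Finset.nonempty_Icc]; omega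
  have hJcard : J.card = j := by rw [hJdef, Nat.card_Icc]; omega
  have hAcard : A.card = k := by rw [hA, Nat.card_Icc]; omega
  -- integrability of finite suprema
  have hintS : ∀ (S : Finset ℕ) (hS : S.Nonempty), S ⊆ Finset.Icc 1 n →
      Integrable (fun ω => S.sup' hS (fun i => X i ω)) P := by
    intro S hS
    induction hS using Finset.Nonempty.cons_induction with
    | singleton y =>
      intro hsub
      simp only [Finset.sup'_singleton]
      have hy := hsub (Finset.mem_singleton_self y)
      rw [Finset.mem_Icc] at hy
      exact hint y hy.1 hy.2
    | cons y s hy hs ih =>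
      intro hsub
      have h1 : y ∈ Finset.Icc 1 n := hsub (Finset.mem_cons_self y s)
      rw [Finset.mem_Icc] at h1
      have h2 := ih (fun z hz => hsub (Finset.mem_cons.mpr (Or.inr hz)))
      refine ((hint y h1.1 h1.2).sup h2).congr ?_
      refine Filter.Eventually.of_forall (fun ω => ?_)
      simp only [Pi.sup_apply]
      exact (Finset.sup'_cons hs (fun i => X i ω)).symm
  -- equal expectations for equal-size subsets
  have hEq : ∀ (S T : Finset ℕ) (hS : S.Nonempty) (hT : T.Nonempty),
      S ⊆ Finset.Icc 1 n → T ⊆ Finset.Icc 1 n → S.card = T.card →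
      ∫ ω, S.sup' hS (fun i => X i ω) ∂P = ∫ ω, T.sup' hT (fun i => X i ω) ∂P := by
    intro S T hS hT hSsub hTsub hc
    obtain ⟨σ, hfix, himg⟩ := exists_perm n (S \ T).card S T rfl hSsub hTsub hc
    have hfix' : ∀ i, ¬(1 ≤ i ∧ i ≤ n) → σ i = i := by
      intro i hi
      exact hfix i (by rw [Finset.mem_Icc]; exact hi)
    have hmapeq := hexch σ hfix'
    set F : (ℕ → ℝ) → ℝ := fun f => S.sup' hS f with hF
    have hFmeas : Measurable F := by
      have hF2 : F = S.sup' hS (fun i => (fun f : ℕ → ℝ => f i)) := by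
        ext f
        rw [hF, Finset.sup'_apply]
      rw [hF2]
      exact Finset.measurable_sup' hS (fun i _ => measurable_pi_apply i)
    have hY : Measurable (fun ω => fun i => X i ω) := measurable_pi_lambda _ (fun i => hmeas i)
    have hYσ : Measurable (fun ω => fun i => X (σ i) ω) :=
      measurable_pi_lambda _ (fun i => hmeas (σ i))
    have h1 : ∫ ω, F (fun i => X (σ i) ω) ∂P = ∫ ω, F (fun i => X i ω) ∂P := by
      rw [← MeasureTheory.integral_map hYσ.aemeasurable hFmeas.aestronglyMeasurable,
          ← MeasureTheory.integral_map hY.aemeasurable hFmeas.aestronglyMeasurable, hmapeq]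
    have h2 : ∀ ω, T.sup' hT (fun i => X i ω) = F (fun i => X (σ i) ω) := by
      intro ω
      rw [Finset.sup'_congr hT himg.symm (fun x _ => rfl), Finset.sup'_image]
      rfl
    calc ∫ ω, S.sup' hS (fun i => X i ω) ∂P = ∫ ω, F (fun i => X i ω) ∂P := rfl
      _ = ∫ ω, F (fun i => X (σ i) ω) ∂P := h1.symm
      _ = ∫ ω, T.sup' hT (fun i => X i ω) ∂P := by
          congr 1
          ext ω
          exact (h2 ω).symm
  -- μ via sup'
  have hIccNe : ∀ m, 1 ≤ m → (Finset.Icc 1 m).Nonempty := by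
    intro m hm
    rw [Finset.nonempty_Icc]
    omega
  have hμ' : ∀ m (hm : 1 ≤ m),
      μ m = ∫ ω, (Finset.Icc 1 m).sup' (hIccNe m hm) (fun i => X i ω) ∂P := by
    intro m hm
    obtain ⟨m', rfl⟩ : ∃ m', m = m' + 1 := ⟨m - 1, by omega⟩
    rw [hμ]
    congr 1
    ext ω
    rw [partialSups_eq_sup'_range]
    have himg2 : (Finset.range (m'+1)).image (· + 1) = Finset.Icc 1 (m'+1) := by
      ext z
      simp only [Finset.mem_image, Finset.mem_range, Finset.mem_Icc]
      constructor
      · rintro ⟨w, hw, rfl⟩; omega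
      · intro hz; exact ⟨z - 1, by omega, by omega⟩
    rw [Finset.sup'_congr (hIccNe _ hm) himg2.symm (fun x _ => rfl), Finset.sup'_image]
    rfl
  -- basic subset facts
  have hsubA : A ⊆ Finset.Icc 1 n := by
    rw [hA]
    exact Finset.Icc_subset_Icc_right (by omega)
  have hsubJn : J ⊆ Finset.Icc 1 n := by
    intro z hz
    rw [hJdef, Finset.mem_Icc] at hz
    rw [Finset.mem_Icc]
    omega
  have hdisj : Disjoint A J := by
    rw [Finset.disjoint_left]
    intro z hz hz2
    rw [hA, Finset.mem_Icc] at hz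
    rw [hJdef, Finset.mem_Icc] at hz2
    omega
  have hAu : ∀ T : Finset ℕ, T ⊆ J →
      (A ∪ T) ⊆ Finset.Icc 1 n ∧ (A ∪ T).card = k + T.card := by
    intro T hT
    refine ⟨Finset.union_subset hsubA (hT.trans hsubJn), ?_⟩
    rw [Finset.card_union_of_disjoint (hdisj.mono_right (Finset.le_iff_subset.mpr hT)), hAcard]
  have hνμ : ∀ T : Finset ℕ, T ⊆ J →
      ∫ ω, (A ∪ T).sup' (hAne.mono Finset.subset_union_left) (fun i => X i ω) ∂P
        = μ (k + T.card) := by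
    intro T hT
    have hTc : T.card ≤ j := by
      rw [← hJcard]
      exact Finset.card_le_card hT
    rw [hμ' (k + T.card) (by omega)]
    apply hEq
    · exact (hAu T hT).1
    · exact Finset.Icc_subset_Icc_right (by omega)
    · rw [(hAu T hT).2, Nat.card_Icc]
      omega
  have hintT : ∀ T ∈ J.powerset,
      Integrable (fun ω => (-1:ℝ)^T.card
        * (A ∪ T).sup' (hAne.mono Finset.subset_union_left) (fun i => X i ω)) P := by
    intro T hT
    exact (hintS _ _ (hAu T (Finset.mem_powerset.mp hT)).1).const_mul _
  -- the key identity
  have key : ∑ i ∈ Finset.range (j+1), (-1:ℝ)^(j-i) * (j.choose i) * μ (k+i)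
      = (-1:ℝ)^(j+1) * ∫ ω, max 0 (J.inf' hJne (fun i => X i ω)
          - A.sup' hAne (fun i => X i ω)) ∂P := by
    have step1 : ∀ i ∈ Finset.range (j+1), (-1:ℝ)^(j-i) * (j.choose i) * μ (k+i)
        = (-1:ℝ)^j * ((-1:ℝ)^i * (j.choose i) * μ (k+i)) := by
      intro i hi
      rw [Finset.mem_range] at hi
      rw [aux_neg_pow (by omega : i ≤ j)]
      ring
    have step2 : ∑ T ∈ J.powerset, ((-1:ℝ)^T.card
          * ∫ ω, (A ∪ T).sup' (hAne.mono Finset.subset_union_left) (fun i => X i ω) ∂P)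
        = ∑ i ∈ Finset.range (j+1), (-1:ℝ)^i * (j.choose i) * μ (k+i) := by
      have e1 : ∀ T ∈ J.powerset, ((-1:ℝ)^T.card
            * ∫ ω, (A ∪ T).sup' (hAne.mono Finset.subset_union_left) (fun i => X i ω) ∂P)
          = (fun c => (-1:ℝ)^c * μ (k + c)) T.card := by
        intro T hT
        rw [hνμ T (Finset.mem_powerset.mp hT)]
      rw [Finset.sum_congr rfl e1, Finset.sum_powerset, hJcard]
      apply Finset.sum_congr rfl
      intro i hi
      rw [Finset.sum_powersetCard i J (fun c => (-1:ℝ)^c * μ (k + c)), hJcard, nsmul_eq_mul]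
      ring
    have hpt : ∀ ω, ∑ T ∈ J.powerset, ((-1:ℝ)^T.card
          * (A ∪ T).sup' (hAne.mono Finset.subset_union_left) (fun i => X i ω))
        = -(max 0 (J.inf' hJne (fun i => X i ω) - A.sup' hAne (fun i => X i ω))) := by
      intro ω
      have h1 : ∀ T ∈ J.powerset, ((-1:ℝ)^T.card
            * (A ∪ T).sup' (hAne.mono Finset.subset_union_left) (fun i => X i ω))
          = (-1:ℝ)^T.card * T.fold max (A.sup' hAne (fun i => X i ω)) (fun i => X i ω) := by
        intro T hT
        rw [sup'_union_fold]
      rw [Finset.sum_congr rfl h1, aux_alt_sum (fun i => X i ω) hJne]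
    calc ∑ i ∈ Finset.range (j+1), (-1:ℝ)^(j-i) * (j.choose i) * μ (k+i)
        = (-1:ℝ)^j * ∑ i ∈ Finset.range (j+1), (-1:ℝ)^i * (j.choose i) * μ (k+i) := by
          rw [Finset.sum_congr rfl step1, ← Finset.mul_sum]
      _ = (-1:ℝ)^j * ∑ T ∈ J.powerset, ((-1:ℝ)^T.card
            * ∫ ω, (A ∪ T).sup' (hAne.mono Finset.subset_union_left) (fun i => X i ω) ∂P) := by
          rw [step2]
      _ = (-1:ℝ)^j * ∑ T ∈ J.powerset, ∫ ω, ((-1:ℝ)^T.card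
            * (A ∪ T).sup' (hAne.mono Finset.subset_union_left) (fun i => X i ω)) ∂P := by
          congr 1
          exact Finset.sum_congr rfl (fun T _ => (MeasureTheory.integral_const_mul _ _).symm)
      _ = (-1:ℝ)^j * ∫ ω, ∑ T ∈ J.powerset, ((-1:ℝ)^T.card
            * (A ∪ T).sup' (hAne.mono Finset.subset_union_left) (fun i => X i ω)) ∂P := by
          congr 1
          exact (MeasureTheory.integral_finset_sum _ hintT).symm
      _ = (-1:ℝ)^j * ∫ ω, -(max 0 (J.inf' hJne (fun i => X i ω)
            - A.sup' hAne (fun i => X i ω))) ∂P := by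
          congr 1
          exact MeasureTheory.integral_congr_ae (Filter.Eventually.of_forall hpt)
      _ = (-1:ℝ)^(j+1) * ∫ ω, max 0 (J.inf' hJne (fun i => X i ω)
            - A.sup' hAne (fun i => X i ω)) ∂P := by
          rw [MeasureTheory.integral_neg, pow_succ]
          ring
  have hg0 : 0 ≤ ∫ ω, max 0 (J.inf' hJne (fun i => X i ω)
      - A.sup' hAne (fun i => X i ω)) ∂P :=
    MeasureTheory.integral_nonneg (fun ω => le_max_left 0 _)
  constructor
  · intro hodd
    rw [key, Even.neg_one_pow hodd.add_one]
    linarith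
  · intro heven _
    rw [key, Odd.neg_one_pow heven.add_one]
    linarith
end

section
/- For exchangeable random variables X_1, ..., X_m, the expected maximum of the first i satisfies μ_i = C(m, i)^{-1} ∑_{l=i}^{m} μ_{l:m} C(l-1, i-1), where μ_{l:m} is the expectation of the l-th order statistic of X_1,...,X_m. -/
open MeasureTheory
open Finset

section Det
variable {m : ℕ} (x : ℕ → ℝ)

noncomputable def sortedList (m : ℕ) (x : ℕ → ℝ) : List ℝ :=
  (List.ofFn fun t : Fin m => x (t+1)).mergeSort (· ≤ ·)

lemma L_sorted (m : ℕ) (x : ℕ → ℝ) : sortedList m x =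
    List.ofFn ((fun t : Fin m => x (t+1)) ∘ Tuple.sort (fun t : Fin m => x (t+1))) :=
  List.Perm.eq_of_pairwise'
    (List.pairwise_mergeSort' _ _)
    ((Tuple.monotone_sort _).sortedLE_ofFn.pairwise)
    ((List.mergeSort_perm _ _).trans ((Tuple.sort (fun t : Fin m => x (t+1))).ofFn_comp_perm _).symm)

lemma L_len (m : ℕ) (x : ℕ → ℝ) : (sortedList m x).length = m := by
  rw [L_sorted]; simp

lemma L_getD (m : ℕ) (x : ℕ → ℝ) (p : ℕ) (hp : p < m) :
    (sortedList m x).getD p 0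
      = (fun t : Fin m => x (t+1)) (Tuple.sort (fun t : Fin m => x (t+1)) ⟨p, hp⟩) := by
  rw [List.getD_eq_getElem _ _ (by rw [L_len]; exact hp),
    List.getElem_of_eq (L_sorted m x), List.getElem_ofFn]
  rfl

noncomputable def mSup (x : ℕ → ℝ) (S : Finset ℕ) : ℝ :=
  if h : S.Nonempty then S.sup' h x else 0

noncomputable def fclip (m : ℕ) (x : ℕ → ℝ) (p : ℕ) : ℝ :=
  (sortedList m x).getD (min p (m-1)) 0

noncomputable def dmap (m : ℕ) (x : ℕ → ℝ) (j : ℕ) : ℕ :=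
  if h : j - 1 < m then ((Tuple.sort (fun t : Fin m => x (t+1)))⁻¹ ⟨j-1, h⟩ : Fin m) else 0

noncomputable def umap (m : ℕ) (x : ℕ → ℝ) (p : ℕ) : ℕ :=
  if h : p < m then ((Tuple.sort (fun t : Fin m => x (t+1))) ⟨p, h⟩ : Fin m) + 1 else 0

lemma L_fclip_lt (hm : 1 ≤ m) {p : ℕ} (hp : p < m) :
    fclip m x p = (sortedList m x).getD p 0 := by
  unfold fclip
  congr 1
  omega

lemma L_mono (hm : 1 ≤ m) : Monotone (fclip m x) := by
  intro p q hpq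
  unfold fclip
  rw [L_getD m x _ (by omega), L_getD m x _ (by omega)]
  exact Tuple.monotone_sort (fun t : Fin m => x (t+1))
    (show (⟨min p (m-1), by omega⟩ : Fin m) ≤ ⟨min q (m-1), by omega⟩ by
      simp [Fin.le_def]; omega)

lemma L_du {j : ℕ} (hj : j ∈ Icc 1 m) :
    dmap m x j ∈ range m ∧ umap m x (dmap m x j) = j := by
  rw [mem_Icc] at hj
  have h1 : j - 1 < m := by omega
  have h2 : dmap m x j = ((Tuple.sort (fun t : Fin m => x (t+1)))⁻¹ ⟨j-1, h1⟩ : Fin m) := by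
    unfold dmap; rw [dif_pos h1]
  have h3 : dmap m x j < m := by rw [h2]; exact Fin.is_lt _
  refine ⟨mem_range.2 h3, ?_⟩
  unfold umap
  rw [dif_pos h3]
  have : (⟨dmap m x j, h3⟩ : Fin m) = (Tuple.sort (fun t : Fin m => x (t+1)))⁻¹ ⟨j-1, h1⟩ := by
    apply Fin.ext; simp only [Fin.val_mk]; exact h2
  rw [this]
  simp
  omega

lemma L_ud {p : ℕ} (hp : p ∈ range m) :
    umap m x p ∈ Icc 1 m ∧ dmap m x (umap m x p) = p := by
  rw [mem_range] at hp
  have h2 : umap m x p = ((Tuple.sort (fun t : Fin m => x (t+1))) ⟨p, hp⟩ : Fin m) + 1 := by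
    unfold umap; rw [dif_pos hp]
  have h3 : umap m x p - 1 < m := by rw [h2]; simp
  refine ⟨mem_Icc.2 ⟨by omega, by have := ((Tuple.sort (fun t : Fin m => x (t+1))) ⟨p, hp⟩).is_lt; omega⟩, ?_⟩
  unfold dmap
  rw [dif_pos h3]
  have : (⟨umap m x p - 1, h3⟩ : Fin m) = (Tuple.sort (fun t : Fin m => x (t+1))) ⟨p, hp⟩ := by
    apply Fin.ext; simp only [Fin.val_mk]; omega
  rw [this]
  simp

lemma L_val (hm : 1 ≤ m) {j : ℕ} (hj : j ∈ Icc 1 m) :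
    x j = fclip m x (dmap m x j) := by
  have hmem := mem_Icc.1 hj
  have h1 : j - 1 < m := by omega
  have h2 : dmap m x j = ((Tuple.sort (fun t : Fin m => x (t+1)))⁻¹ ⟨j-1, h1⟩ : Fin m) := by
    unfold dmap; rw [dif_pos h1]
  have h3 : dmap m x j < m := by rw [h2]; exact Fin.is_lt _
  rw [L_fclip_lt x hm h3, L_getD m x _ h3]
  have : (⟨dmap m x j, h3⟩ : Fin m) = (Tuple.sort (fun t : Fin m => x (t+1)))⁻¹ ⟨j-1, h1⟩ := by
    apply Fin.ext; simp only [Fin.val_mk]; exact h2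
  rw [this]
  simp only [Equiv.Perm.inv_def, Equiv.apply_symm_apply]
  congr 1
  omega

lemma L_emem {n : ℕ} {S : Finset ℕ} (hS : S ∈ powersetCard n (Icc 1 m)) :
    S.image (dmap m x) ∈ powersetCard n (range m) ∧ (S.image (dmap m x)).image (umap m x) = S := by
  rw [mem_powersetCard] at hS
  have hinj : Set.InjOn (dmap m x) S := by
    intro a ha b hb hab
    rw [← (L_du x (hS.1 ha)).2, ← (L_du x (hS.1 hb)).2, hab]
  constructor
  · rw [mem_powersetCard]
    exact ⟨fun p hp => by
      obtain ⟨j, hj, rfl⟩ := Finset.mem_image.1 hp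
      exact (L_du x (hS.1 hj)).1, by rw [Finset.card_image_of_injOn hinj, hS.2]⟩
  · rw [Finset.image_image]
    rw [show S.image (umap m x ∘ dmap m x) = S.image id from
      Finset.image_congr fun j hj => (L_du x (hS.1 hj)).2]
    exact Finset.image_id

lemma L_e'mem {n : ℕ} {T : Finset ℕ} (hT : T ∈ powersetCard n (range m)) :
    T.image (umap m x) ∈ powersetCard n (Icc 1 m) ∧ (T.image (umap m x)).image (dmap m x) = T := by
  rw [mem_powersetCard] at hT
  have hinj : Set.InjOn (umap m x) T := by
    intro a ha b hb hab
    rw [← (L_ud x (hT.1 ha)).2, ← (L_ud x (hT.1 hb)).2, hab]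
  constructor
  · rw [mem_powersetCard]
    exact ⟨fun p hp => by
      obtain ⟨j, hj, rfl⟩ := Finset.mem_image.1 hp
      exact (L_ud x (hT.1 hj)).1, by rw [Finset.card_image_of_injOn hinj, hT.2]⟩
  · rw [Finset.image_image]
    rw [show T.image (dmap m x ∘ umap m x) = T.image id from
      Finset.image_congr fun j hj => (L_ud x (hT.1 hj)).2]
    exact Finset.image_id

lemma sup_id_mem {T : Finset ℕ} (h : T.Nonempty) : T.sup id ∈ T := by
  have := T.max'_mem h
  rwa [Finset.max'_eq_sup', Finset.sup'_eq_sup] at this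

lemma mono_sup' {f : ℕ → ℝ} (hf : Monotone f) {T : Finset ℕ} (h : T.Nonempty) :
    T.sup' h f = f (T.sup id) := by
  apply le_antisymm
  · exact Finset.sup'_le _ _ fun b hb => hf (Finset.le_sup (f := id) hb)
  · exact Finset.le_sup' f (sup_id_mem h)

lemma L_msup (hm : 1 ≤ m) {n : ℕ} (hn : 1 ≤ n) {S : Finset ℕ}
    (hS : S ∈ powersetCard n (Icc 1 m)) :
    mSup x S = fclip m x ((S.image (dmap m x)).sup id) := by
  have hScard := (mem_powersetCard.1 hS).2
  have hne : S.Nonempty := Finset.card_pos.1 (by omega)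
  have hne' : (S.image (dmap m x)).Nonempty := hne.image _
  rw [mSup, dif_pos hne, ← mono_sup' (L_mono x hm) hne', Finset.sup'_image hne']
  exact Finset.sup'_congr _ rfl fun j hj => L_val x hm ((mem_powersetCard.1 hS).1 hj)

end Det

lemma count_sum (f : ℕ → ℝ) (i : ℕ) (m : ℕ) :
    ∑ T ∈ powersetCard (i+1) (range m), f (T.sup id)
      = ∑ p ∈ range m, (p.choose i : ℝ) * f p := by
  induction m with
  | zero =>
    rw [Finset.powersetCard_eq_empty.2 (by simp)]
    simp
  | succ m ih =>
    rw [Finset.range_add_one, Finset.powersetCard_succ_insert (by simp), Finset.sum_union, Finset.sum_image ?hinj]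
    · rw [Finset.sum_insert (by simp), ← ih, add_comm ((m.choose i : ℝ) * f m)]
      congr 1
      have : ∀ T ∈ powersetCard i (range m), f ((insert m T).sup id) = f m := by
        intro T hT
        congr 1
        simp only [Finset.mem_powersetCard] at hT
        rw [Finset.sup_insert]
        simp only [id]
        have : T.sup id ≤ m := Finset.sup_le fun b hb => le_of_lt (Finset.mem_range.1 (hT.1 hb))
        omega
      rw [Finset.sum_congr rfl this, Finset.sum_const, Finset.card_powersetCard, Finset.card_range]
      simp [mul_comm]
    case hinj =>
      intro T1 h1 T2 h2 he
      simp only [Finset.mem_coe, Finset.mem_powersetCard] at h1 h2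
      have hm1 : m ∉ T1 := fun hc => by simpa using Finset.mem_range.1 (h1.1 hc)
      have hm2 : m ∉ T2 := fun hc => by simpa using Finset.mem_range.1 (h2.1 hc)
      have := congrArg (Finset.erase · m) he
      simpa [Finset.erase_insert, hm1, hm2] using this
    · rw [Finset.disjoint_left]
      intro T hT hT'
      simp only [Finset.mem_powersetCard] at hT
      have : m ∉ T := fun hc => by simpa using Finset.mem_range.1 (hT.1 hc)
      simp only [Finset.mem_image] at hT'
      obtain ⟨T', hT', rfl⟩ := hT'
      exact this (Finset.mem_insert_self m T')

lemma pcard_nonempty {n m : ℕ} (h : n ≤ m) : (powersetCard n (range m)).Nonempty := by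
  rw [Finset.powersetCard_nonempty, Finset.card_range]; exact h

lemma pcardI_nonempty {n m : ℕ} (h : n ≤ m) : (powersetCard n (Icc 1 m)).Nonempty := by
  rw [Finset.powersetCard_nonempty, Nat.card_Icc]; omega

lemma inf_pos {f : ℕ → ℝ} (hf : Monotone f) {k m : ℕ} (hk : k < m) :
    (powersetCard (k+1) (range m)).inf' (pcard_nonempty hk) (fun T => f (T.sup id)) = f k := by
  apply le_antisymm
  · have hmem : range (k+1) ∈ powersetCard (k+1) (range m) := by
      rw [Finset.mem_powersetCard]; exact ⟨Finset.range_subset_range.2 hk, Finset.card_range _⟩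
    have h1 := Finset.inf'_le (fun T => f (T.sup id)) hmem
    have h2 : (range (k+1)).sup id = k :=
      le_antisymm (Finset.sup_le fun b hb => Nat.lt_succ_iff.1 (mem_range.1 hb))
        (Finset.le_sup (f := id) (mem_range.2 k.lt_succ_self))
    simp only [h2] at h1; exact h1
  · apply Finset.le_inf'
    intro T hT
    rw [Finset.mem_powersetCard] at hT
    apply hf
    by_contra hc
    push_neg at hc
    have hsub : T ⊆ range (T.sup id + 1) :=
      fun t ht => mem_range.2 (Nat.lt_succ_of_le (Finset.le_sup (f := id) ht))
    have := Finset.card_le_card hsub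
    rw [hT.2, Finset.card_range] at this
    omega

lemma det_sum (m : ℕ) (x : ℕ → ℝ) {i : ℕ} (hi1 : 1 ≤ i) (him : i ≤ m) :
    ∑ S ∈ powersetCard i (Icc 1 m), mSup x S
      = ∑ l ∈ Icc i m, ((l-1).choose (i-1) : ℝ) * (sortedList m x).getD (l-1) 0 := by
  have hm : 1 ≤ m := le_trans hi1 him
  have step1 : ∑ S ∈ powersetCard i (Icc 1 m), mSup x S
      = ∑ T ∈ powersetCard i (range m), fclip m x (T.sup id) :=
    Finset.sum_nbij' (fun S => S.image (dmap m x)) (fun T => T.image (umap m x))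
      (fun S hS => (L_emem x hS).1) (fun T hT => (L_e'mem x hT).1)
      (fun S hS => (L_emem x hS).2) (fun T hT => (L_e'mem x hT).2)
      (fun S hS => L_msup x hm hi1 hS)
  have step2 : ∑ T ∈ powersetCard i (range m), fclip m x (T.sup id)
      = ∑ p ∈ range m, ((p.choose (i-1)) : ℝ) * fclip m x p := by
    have := count_sum (fclip m x) (i-1) m
    rwa [show i - 1 + 1 = i by omega] at this
  have step3 : ∑ p ∈ range m, ((p.choose (i-1)) : ℝ) * fclip m x p
      = ∑ l ∈ Icc 1 m, (((l-1).choose (i-1)) : ℝ) * fclip m x (l-1) := by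
    rw [show Icc 1 m = (range m).image (· + 1) by
      ext a
      simp only [Finset.mem_image, Finset.mem_range, Finset.mem_Icc]
      constructor
      · rintro ⟨h1, h2⟩; exact ⟨a - 1, by omega, by omega⟩
      · rintro ⟨b, hb, rfl⟩; omega]
    rw [Finset.sum_image (by intro a _ b _ h; simp only at h; omega)]
    simp
  have step4 : ∑ l ∈ Icc i m, (((l-1).choose (i-1)) : ℝ) * fclip m x (l-1)
      = ∑ l ∈ Icc 1 m, (((l-1).choose (i-1)) : ℝ) * fclip m x (l-1) := by
    apply Finset.sum_subset (Finset.Icc_subset_Icc (by omega) le_rfl)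
    intro l hl hl'
    rw [Finset.mem_Icc] at hl
    rw [Finset.mem_Icc] at hl'
    have : l - 1 < i - 1 := by omega
    rw [Nat.choose_eq_zero_of_lt this]
    simp
  rw [step1, step2, step3, ← step4]
  apply Finset.sum_congr rfl
  intro l hl
  rw [Finset.mem_Icc] at hl
  rw [L_fclip_lt x hm (show l - 1 < m by omega)]

lemma det_ord (m : ℕ) (x : ℕ → ℝ) {l : ℕ} (hl1 : 1 ≤ l) (hlm : l ≤ m) :
    (sortedList m x).getD (l-1) 0
      = (powersetCard l (Icc 1 m)).inf' (pcardI_nonempty hlm) (mSup x) := by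
  have hm : 1 ≤ m := le_trans hl1 hlm
  obtain ⟨k, rfl⟩ : ∃ k, l = k + 1 := ⟨l - 1, by omega⟩
  have hk : k < m := by omega
  simp only [Nat.add_sub_cancel]
  rw [← L_fclip_lt x hm hk]
  rw [← inf_pos (L_mono x hm) hk]
  apply le_antisymm
  · apply Finset.le_inf'
    intro S hS
    have h1 := L_msup x hm hl1 hS
    rw [h1]
    exact Finset.inf'_le _ (L_emem x hS).1
  · apply Finset.le_inf'
    intro T hT
    have h1 := L_msup x hm hl1 (L_e'mem x hT).1
    rw [(L_e'mem x hT).2] at h1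
    rw [← h1]
    exact Finset.inf'_le _ (L_e'mem x hT).1

lemma meas_sup' {ι Ω : Type*} [MeasurableSpace Ω] {S : Finset ι} (h : S.Nonempty)
    (g : ι → Ω → ℝ) (hg : ∀ j ∈ S, Measurable (g j)) :
    Measurable fun ω => S.sup' h (fun j => g j ω) := by
  induction h using Finset.Nonempty.cons_induction with
  | singleton a => simpa using hg a (by simp)
  | cons a s ha hs ih =>
    have hrw : (fun ω => (Finset.cons a s ha).sup' (Finset.cons_nonempty ha) fun j => g j ω)
        = fun ω => g a ω ⊔ s.sup' hs (fun j => g j ω) := by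
      funext ω; exact Finset.sup'_cons hs _
    rw [hrw]
    exact (hg a (by simp)).sup (ih fun j hj => hg j (by simp [hj]))

lemma integr_sup' {ι Ω : Type*} [MeasurableSpace Ω] {P : Measure Ω} {S : Finset ι} (h : S.Nonempty)
    (g : ι → Ω → ℝ) (hg : ∀ j ∈ S, Integrable (g j) P) :
    Integrable (fun ω => S.sup' h (fun j => g j ω)) P := by
  induction h using Finset.Nonempty.cons_induction with
  | singleton a => simpa using hg a (by simp)
  | cons a s ha hs ih =>
    have hrw : (fun ω => (Finset.cons a s ha).sup' (Finset.cons_nonempty ha) fun j => g j ω)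
        = fun ω => g a ω ⊔ s.sup' hs (fun j => g j ω) := by
      funext ω; exact Finset.sup'_cons hs _
    rw [hrw]
    exact (hg a (by simp)).sup (ih fun j hj => hg j (by simp [hj]))

lemma integr_inf' {ι Ω : Type*} [MeasurableSpace Ω] {P : Measure Ω} {S : Finset ι} (h : S.Nonempty)
    (g : ι → Ω → ℝ) (hg : ∀ j ∈ S, Integrable (g j) P) :
    Integrable (fun ω => S.inf' h (fun j => g j ω)) P := by
  induction h using Finset.Nonempty.cons_induction with
  | singleton a => simpa using hg a (by simp)
  | cons a s ha hs ih =>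
    have hrw : (fun ω => (Finset.cons a s ha).inf' (Finset.cons_nonempty ha) fun j => g j ω)
        = fun ω => g a ω ⊓ s.inf' hs (fun j => g j ω) := by
      funext ω; exact Finset.inf'_cons hs _
    rw [hrw]
    exact (hg a (by simp)).inf (ih fun j hj => hg j (by simp [hj]))

lemma exists_perm_s10 {m i : ℕ} (hi : 1 ≤ i) (him : i ≤ m) {S : Finset ℕ}
    (hS : S ∈ powersetCard i (Icc 1 m)) :
    ∃ π : Equiv.Perm ℕ, (∀ j, ¬(1 ≤ j ∧ j ≤ m) → π j = j) ∧ (Icc 1 i).image π = S := by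
  rw [mem_powersetCard] at hS
  obtain ⟨hSsub, hScard⟩ := hS
  have hBsub : Icc 1 i ⊆ Icc 1 m := Finset.Icc_subset_Icc le_rfl him
  have hBcard : (Icc 1 i).card = i := by rw [Nat.card_Icc]; omega
  have hc1 : Fintype.card (Icc 1 i : Finset ℕ) = Fintype.card (S : Finset ℕ) := by
    simp [Fintype.card_coe, hBcard, hScard]
  have hc2 : Fintype.card ((Icc 1 m) \ (Icc 1 i) : Finset ℕ)
      = Fintype.card ((Icc 1 m) \ S : Finset ℕ) := by
    simp [Fintype.card_coe, Finset.card_sdiff_of_subset hBsub, Finset.card_sdiff_of_subset hSsub, hBcard, hScard]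
  let e1 := Fintype.equivOfCardEq hc1
  let e2 := Fintype.equivOfCardEq hc2
  classical
  let φ : ℕ → ℕ := fun j =>
    if h : j ∈ Icc 1 i then (e1 ⟨j, h⟩ : ℕ)
    else if h2 : j ∈ (Icc 1 m) \ (Icc 1 i) then (e2 ⟨j, h2⟩ : ℕ) else j
  let ψ : ℕ → ℕ := fun j =>
    if h : j ∈ S then (e1.symm ⟨j, h⟩ : ℕ)
    else if h2 : j ∈ (Icc 1 m) \ S then (e2.symm ⟨j, h2⟩ : ℕ) else j
  have he1S : ∀ (a : (Icc 1 i : Finset ℕ)), (e1 a : ℕ) ∈ S := fun a => (e1 a).2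
  have he2S : ∀ (a : ((Icc 1 m) \ (Icc 1 i) : Finset ℕ)), (e2 a : ℕ) ∈ (Icc 1 m) \ S :=
    fun a => (e2 a).2
  have he1B : ∀ (a : (S : Finset ℕ)), (e1.symm a : ℕ) ∈ Icc 1 i := fun a => (e1.symm a).2
  have he2B : ∀ (a : ((Icc 1 m) \ S : Finset ℕ)), (e2.symm a : ℕ) ∈ (Icc 1 m) \ (Icc 1 i) :=
    fun a => (e2.symm a).2
  have hleft : ∀ j, ψ (φ j) = j := by
    intro j
    by_cases h : j ∈ Icc 1 i
    · have h1 : φ j = (e1 ⟨j, h⟩ : ℕ) := dif_pos h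
      have h2 : φ j ∈ S := h1 ▸ he1S ⟨j, h⟩
      simp only [ψ, dif_pos h2]
      have : (⟨φ j, h2⟩ : (S : Finset ℕ)) = e1 ⟨j, h⟩ := Subtype.ext h1
      rw [this, Equiv.symm_apply_apply]
    · by_cases h2 : j ∈ (Icc 1 m) \ (Icc 1 i)
      · have h1 : φ j = (e2 ⟨j, h2⟩ : ℕ) := by simp only [φ, dif_neg h, dif_pos h2]
        have h3 : φ j ∈ (Icc 1 m) \ S := h1 ▸ he2S ⟨j, h2⟩
        have h4 : φ j ∉ S := (Finset.mem_sdiff.1 h3).2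
        simp only [ψ, dif_neg h4, dif_pos h3]
        have : (⟨φ j, h3⟩ : ((Icc 1 m) \ S : Finset ℕ)) = e2 ⟨j, h2⟩ := Subtype.ext h1
        rw [this, Equiv.symm_apply_apply]
      · have h1 : φ j = j := by simp only [φ, dif_neg h, dif_neg h2]
        have hm : j ∉ Icc 1 m := by
          intro hc
          exact h2 (Finset.mem_sdiff.2 ⟨hc, h⟩)
        have h4 : j ∉ S := fun hc => hm (hSsub hc)
        have h5 : j ∉ (Icc 1 m) \ S := fun hc => hm (Finset.mem_sdiff.1 hc).1
        rw [h1]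
        simp only [ψ, dif_neg h4, dif_neg h5]
  have hright : ∀ j, φ (ψ j) = j := by
    intro j
    by_cases h : j ∈ S
    · have h1 : ψ j = (e1.symm ⟨j, h⟩ : ℕ) := dif_pos h
      have h2 : ψ j ∈ Icc 1 i := h1 ▸ he1B ⟨j, h⟩
      simp only [φ, dif_pos h2]
      have : (⟨ψ j, h2⟩ : (Icc 1 i : Finset ℕ)) = e1.symm ⟨j, h⟩ := Subtype.ext h1
      rw [this, Equiv.apply_symm_apply]
    · by_cases h2 : j ∈ (Icc 1 m) \ S
      · have h1 : ψ j = (e2.symm ⟨j, h2⟩ : ℕ) := by simp only [ψ, dif_neg h, dif_pos h2]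
        have h3 : ψ j ∈ (Icc 1 m) \ (Icc 1 i) := h1 ▸ he2B ⟨j, h2⟩
        have h4 : ψ j ∉ Icc 1 i := (Finset.mem_sdiff.1 h3).2
        simp only [φ, dif_neg h4, dif_pos h3]
        have : (⟨ψ j, h3⟩ : ((Icc 1 m) \ (Icc 1 i) : Finset ℕ)) = e2.symm ⟨j, h2⟩ := Subtype.ext h1
        rw [this, Equiv.apply_symm_apply]
      · have h1 : ψ j = j := by simp only [ψ, dif_neg h, dif_neg h2]
        have hm : j ∉ Icc 1 m := by
          intro hc
          exact h2 (Finset.mem_sdiff.2 ⟨hc, h⟩)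
        have h4 : j ∉ Icc 1 i := fun hc => hm (hBsub hc)
        have h5 : j ∉ (Icc 1 m) \ (Icc 1 i) := fun hc => hm (Finset.mem_sdiff.1 hc).1
        rw [h1]
        simp only [φ, dif_neg h4, dif_neg h5]
  refine ⟨⟨φ, ψ, hleft, hright⟩, ?_, ?_⟩
  · intro j hj
    rw [← Finset.mem_Icc] at hj
    have h4 : j ∉ Icc 1 i := fun hc => hj (hBsub hc)
    have h5 : j ∉ (Icc 1 m) \ (Icc 1 i) := fun hc => hj (Finset.mem_sdiff.1 hc).1
    show φ j = j
    simp only [φ, dif_neg h4, dif_neg h5]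
  · apply Finset.eq_of_subset_of_card_le
    · intro p hp
      obtain ⟨j, hj, rfl⟩ := Finset.mem_image.1 hp
      show φ j ∈ S
      have h1 : φ j = (e1 ⟨j, hj⟩ : ℕ) := dif_pos hj
      exact h1 ▸ he1S ⟨j, hj⟩
    · rw [hScard, Finset.card_image_of_injOn ((Equiv.injective _).injOn), hBcard]

lemma sup'_Icc_range (i : ℕ) (hi : 1 ≤ i) (x : ℕ → ℝ) (h1 : (Icc 1 i).Nonempty)
    (h2 : (range (i-1+1)).Nonempty) :
    (range (i-1+1)).sup' h2 (fun n => x (n+1)) = (Icc 1 i).sup' h1 x := by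
  apply le_antisymm
  · apply Finset.sup'_le
    intro n hn
    rw [Finset.mem_range] at hn
    exact Finset.le_sup' x (Finset.mem_Icc.2 (by omega))
  · apply Finset.sup'_le
    intro j hj
    rw [Finset.mem_Icc] at hj
    have hj1 : j - 1 ∈ range (i-1+1) := Finset.mem_range.2 (by omega)
    have : x j = x ((j-1)+1) := by congr 1; omega
    rw [this]
    exact Finset.le_sup' (fun n => x (n+1)) hj1

theorem expected_max_via_order_statistics
    {Ω : Type*} [MeasurableSpace Ω] (P : Measure Ω) [IsProbabilityMeasure P]
    (m : ℕ) (X : ℕ → Ω → ℝ)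
    (hmeas : ∀ i, Measurable (X i))
    (hint : ∀ i, 1 ≤ i → i ≤ m → Integrable (X i) P)
    (hexch : ∀ σ : Equiv.Perm ℕ, (∀ i, ¬(1 ≤ i ∧ i ≤ m) → σ i = i) →
        Measure.map (fun ω => fun i => X (σ i) ω) P = Measure.map (fun ω => fun i => X i ω) P)
    (hdistinct : ∀ i j, 1 ≤ i → i ≤ m → 1 ≤ j → j ≤ m → i ≠ j →
        ∀ᵐ ω ∂P, X i ω ≠ X j ω)
    (μ : ℕ → ℝ)
    (hμ : ∀ k, μ k = ∫ ω, (partialSups (fun i => X (i + 1) ω)) (k - 1) ∂P)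
    (μord : ℕ → ℝ)
    (hμord : ∀ l, μord l =
        ∫ ω, ((List.ofFn fun i : Fin m => X (i + 1) ω).mergeSort (· ≤ ·)).getD (l - 1) 0 ∂P) :
    ∀ i : ℕ, 1 ≤ i → i ≤ m →
      μ i = ((m.choose i : ℝ))⁻¹ *
        ∑ l ∈ Finset.Icc i m, μord l * ((l - 1).choose (i - 1)) := by
  intro i hi1 him
  classical
  have hm : 1 ≤ m := le_trans hi1 him
  have hBne : (Icc 1 i).Nonempty := ⟨1, Finset.mem_Icc.2 ⟨le_rfl, hi1⟩⟩
  have hRne : (range (i-1+1)).Nonempty := ⟨0, Finset.mem_range.2 (by omega)⟩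
  -- (1) μ i as sup' over Icc 1 i
  have hμi : μ i = ∫ ω, (Icc 1 i).sup' hBne (fun j => X j ω) ∂P := by
    rw [hμ i]
    congr 1
    funext ω
    rw [partialSups_eq_sup'_range]
    exact sup'_Icc_range i hi1 (fun j => X j ω) hBne hRne
  -- integrability of mSup over subsets
  have hintS : ∀ {n : ℕ}, 1 ≤ n → ∀ S ∈ powersetCard n (Icc 1 m),
      Integrable (fun ω => mSup (fun j => X j ω) S) P := by
    intro n hn S hS
    rw [mem_powersetCard] at hS
    have hne : S.Nonempty := Finset.card_pos.1 (by omega)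
    have hrw : (fun ω => mSup (fun j => X j ω) S)
        = fun ω => S.sup' hne (fun j => X j ω) := funext fun ω => dif_pos hne
    rw [hrw]
    exact integr_sup' hne _ fun j hj =>
      hint j (Finset.mem_Icc.1 (hS.1 hj)).1 (Finset.mem_Icc.1 (hS.1 hj)).2
  -- exchangeability: each subset has the same expected max
  have hexch_int : ∀ S ∈ powersetCard i (Icc 1 m),
      ∫ ω, mSup (fun j => X j ω) S ∂P = μ i := by
    intro S hS
    obtain ⟨π, hπfix, hπim⟩ := exists_perm_s10 hi1 him hS
    have hScard := (mem_powersetCard.1 hS).2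
    have hne : S.Nonempty := Finset.card_pos.1 (by omega)
    set g : (ℕ → ℝ) → ℝ := fun v => (Icc 1 i).sup' hBne (fun j => v j) with hg_def
    have hg : Measurable g := meas_sup' hBne (fun j (v : ℕ → ℝ) => v j) fun j _ => measurable_pi_apply j
    have hF1 : Measurable fun ω => fun n => X (π n) ω :=
      measurable_pi_lambda _ fun n => hmeas (π n)
    have hF2 : Measurable fun ω => fun n => X n ω :=
      measurable_pi_lambda _ fun n => hmeas n
    have hstep : ∀ ω, mSup (fun j => X j ω) S = g (fun n => X (π n) ω) := by
      intro ω
      rw [mSup, dif_pos hne]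
      have h1 : S.sup' hne (fun j => X j ω)
          = ((Icc 1 i).image π).sup' (hπim ▸ hne) (fun j => X j ω) := by
        apply Finset.sup'_congr
        · exact hπim.symm
        · intro a _; rfl
      rw [h1, Finset.sup'_image]
      rfl
    have hmain : ∫ ω, mSup (fun j => X j ω) S ∂P = ∫ ω, g (fun n => X (π n) ω) ∂P :=
      integral_congr_ae (Filter.Eventually.of_forall hstep)
    rw [hmain]
    have h2 : ∫ ω, g (fun n => X (π n) ω) ∂P
        = ∫ v, g v ∂(Measure.map (fun ω => fun n => X (π n) ω) P) :=
      (integral_map hF1.aemeasurable hg.aestronglyMeasurable).symm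
    rw [h2, hexch π hπfix, integral_map hF2.aemeasurable hg.aestronglyMeasurable, hμi]
  -- main computation
  have hcard : (powersetCard i (Icc 1 m)).card = m.choose i := by
    rw [Finset.card_powersetCard, Nat.card_Icc]
    norm_num
  have hchain : (m.choose i : ℝ) * μ i
      = ∑ l ∈ Icc i m, μord l * ((l - 1).choose (i - 1) : ℝ) := by
    have h1 : ∑ S ∈ powersetCard i (Icc 1 m), ∫ ω, mSup (fun j => X j ω) S ∂P
        = (m.choose i : ℝ) * μ i := by
      rw [Finset.sum_congr rfl hexch_int, Finset.sum_const, hcard, nsmul_eq_mul]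
    rw [← h1, ← integral_finset_sum _ fun S hS => hintS hi1 S hS]
    have h2 : (fun ω => ∑ S ∈ powersetCard i (Icc 1 m), mSup (fun j => X j ω) S)
        = fun ω => ∑ l ∈ Icc i m,
            ((l-1).choose (i-1) : ℝ) * (sortedList m (fun j => X j ω)).getD (l-1) 0 :=
      funext fun ω => det_sum m _ hi1 him
    rw [h2]
    have hgl_int : ∀ l ∈ Icc i m,
        Integrable (fun ω => (sortedList m (fun j => X j ω)).getD (l-1) 0) P := by
      intro l hl
      rw [Finset.mem_Icc] at hl
      have hl1 : 1 ≤ l := le_trans hi1 hl.1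
      have hrw : (fun ω => (sortedList m (fun j => X j ω)).getD (l-1) 0)
          = fun ω => (powersetCard l (Icc 1 m)).inf' (pcardI_nonempty hl.2)
              (fun S => mSup (fun j => X j ω) S) :=
        funext fun ω => det_ord m _ hl1 hl.2
      rw [hrw]
      exact integr_inf' _ _ fun S hS => hintS hl1 S hS
    rw [integral_finset_sum _ fun l hl => ((hgl_int l hl).const_mul _)]
    apply Finset.sum_congr rfl
    intro l hl
    rw [MeasureTheory.integral_const_mul]
    have : μord l = ∫ ω, (sortedList m (fun j => X j ω)).getD (l-1) 0 ∂P := by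
      rw [hμord l]
      rfl
    rw [this]
    ring
  have hC : ((m.choose i : ℕ) : ℝ) ≠ 0 := Nat.cast_ne_zero.2 (Nat.choose_pos him).ne'
  rw [← hchain, inv_mul_cancel_left₀ hC]
end

section
/- Let X_1, X_2, ... be i.i.d. integrable real random variables with CDF F, not almost surely constant, and μ_k := E[max(X_1,...,X_k)]. Then μ_{k+1} - μ_k = ∫_{-∞}^{∞} F(x)^k (1 - F(x)) dx, and this quantity is strictly positive; hence (μ_k) is strictly increasing. -/
open MeasureTheory


lemma aux_meas_partialSups {Ω : Type*} [MeasurableSpace Ω] (f : ℕ → Ω → ℝ)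
    (hf : ∀ i, Measurable (f i)) (n : ℕ) :
    Measurable (fun ω => partialSups (fun i => f i ω) n) := by
  induction n with
  | zero => simpa using hf 0
  | succ n ih => simpa [partialSups_succ] using ih.max (hf (n+1))

lemma aux_int_partialSups {Ω : Type*} [MeasurableSpace Ω] {P : Measure Ω} (f : ℕ → Ω → ℝ)
    (hf : ∀ i, Measurable (f i)) (hi : ∀ i, Integrable (f i) P) (n : ℕ) :
    Integrable (fun ω => partialSups (fun i => f i ω) n) P := by
  refine Integrable.mono' (g := fun ω => ∑ i ∈ Finset.range (n+1), |f i ω|)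
    (integrable_finset_sum _ (fun i _ => (hi i).abs)) (aux_meas_partialSups f hf n).aestronglyMeasurable ?_
  refine Filter.Eventually.of_forall (fun ω => ?_)
  have hnn : 0 ≤ ∑ i ∈ Finset.range (n+1), |f i ω| :=
    Finset.sum_nonneg fun i _ => abs_nonneg _
  rw [Real.norm_eq_abs, abs_le]
  constructor
  · refine le_trans ?_ (le_partialSups_of_le (fun i => f i ω) (Nat.zero_le n))
    have : |f 0 ω| ≤ ∑ i ∈ Finset.range (n+1), |f i ω| :=
      Finset.single_le_sum (fun i _ => abs_nonneg (f i ω)) (Finset.mem_range.mpr (Nat.succ_pos n))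
    linarith [neg_abs_le (f 0 ω)]
  · refine partialSups_le _ _ _ (fun k hk => ?_)
    refine le_trans (le_abs_self _) ?_
    exact Finset.single_le_sum (fun i _ => abs_nonneg (f i ω)) (Finset.mem_range.mpr (Nat.lt_succ_of_le hk))


lemma aux_key {Ω : Type*} [MeasurableSpace Ω] (P : Measure Ω)
    (X : ℕ → Ω → ℝ) (hmeas : ∀ i, Measurable (X i))
    (hindep : ProbabilityTheory.iIndepFun X P)
    (hident : ∀ i, Measure.map (X i) P = Measure.map (X 1) P)
    (k : ℕ) (x : ℝ) :
    P ((⋂ i ∈ Finset.range k, X (i+1) ⁻¹' Set.Iic x) ∩ X (k+1) ⁻¹' Set.Ioi x)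
      = (P (X 1 ⁻¹' Set.Iic x))^k * P (X 1 ⁻¹' Set.Ioi x) := by
  classical
  set sets : ℕ → Set ℝ := fun i => if i = k+1 then Set.Ioi x else Set.Iic x with hsets
  have hid : ∀ i, ∀ s : Set ℝ, MeasurableSet s → P (X i ⁻¹' s) = P (X 1 ⁻¹' s) := by
    intro i s hs
    rw [← Measure.map_apply (hmeas i) hs, hident i, Measure.map_apply (hmeas 1) hs]
  have hprod := hindep.measure_inter_preimage_eq_mul (Finset.Icc 1 (k+1)) (sets := sets)
    (fun i _ => by by_cases h : i = k+1 <;> simp [hsets, h])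
  have hset : (⋂ i ∈ Finset.Icc 1 (k+1), X i ⁻¹' sets i)
      = (⋂ i ∈ Finset.range k, X (i+1) ⁻¹' Set.Iic x) ∩ X (k+1) ⁻¹' Set.Ioi x := by
    ext ω
    simp only [Set.mem_iInter, Set.mem_inter_iff, Set.mem_preimage, Finset.mem_Icc,
      Finset.mem_range, hsets]
    constructor
    · intro h
      refine ⟨fun i hi => ?_, ?_⟩
      · have := h (i+1) ⟨by omega, by omega⟩
        rwa [if_neg (by omega)] at this
      · have := h (k+1) ⟨by omega, le_rfl⟩
        rwa [if_pos rfl] at this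
    · rintro ⟨h1, h2⟩ i ⟨hi1, hi2⟩
      by_cases h : i = k+1
      · subst h; rwa [if_pos rfl]
      · rw [if_neg h]
        have := h1 (i-1) (by omega)
        have hii : i - 1 + 1 = i := by omega
        rwa [hii] at this
  have hIcc : Finset.Icc 1 (k+1) = insert (k+1) (Finset.Icc 1 k) := by
    ext i; simp only [Finset.mem_Icc, Finset.mem_insert]; omega
  have hterm : P (X (k+1) ⁻¹' sets (k+1)) = P (X 1 ⁻¹' Set.Ioi x) := by
    rw [hsets]; simp only [if_pos rfl]; exact hid _ _ measurableSet_Ioi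
  have hrest : ∏ i ∈ Finset.Icc 1 k, P (X i ⁻¹' sets i) = (P (X 1 ⁻¹' Set.Iic x))^k := by
    have hc : ∀ i ∈ Finset.Icc 1 k, P (X i ⁻¹' sets i) = P (X 1 ⁻¹' Set.Iic x) := by
      intro i hi
      simp only [Finset.mem_Icc] at hi
      have hs : sets i = Set.Iic x := if_neg (by omega)
      rw [hs]; exact hid _ _ measurableSet_Iic
    rw [Finset.prod_congr rfl hc, Finset.prod_const, Nat.card_Icc]
    norm_num
  rw [hset] at hprod
  rw [hprod, hIcc, Finset.prod_insert (by simp), hterm, hrest, mul_comm]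


lemma aux_nondeg (ν : Measure ℝ) [IsProbabilityMeasure ν]
    (h : ∀ x, ν (Set.Iic x) = 0 ∨ ν (Set.Iic x) = 1) : ∃ a, ν {a} = 1 := by
  -- exists b with measure 1
  have htop : Filter.Tendsto (fun x => ν (Set.Iic x)) Filter.atTop (nhds 1) := by
    simpa using tendsto_measure_Iic_atTop ν
  have hb : ∃ b, ν (Set.Iic b) = 1 := by
    have := htop.eventually_const_lt (show (1/2 : ENNReal) < 1 by norm_num)
    obtain ⟨b, hb⟩ := this.exists
    rcases h b with h0 | h1
    · rw [h0] at hb; norm_num at hb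
    · exact ⟨b, h1⟩
  -- exists c with measure 0
  have hc : ∃ c, ν (Set.Iic c) = 0 := by
    have hemp : (⋂ n : ℕ, Set.Iic (-(n:ℝ))) = ∅ := by
      ext x
      simp only [Set.mem_iInter, Set.mem_Iic, Set.mem_empty_iff_false, iff_false, not_forall,
        not_le]
      obtain ⟨n, hn⟩ := exists_nat_gt (-x)
      exact ⟨n, by linarith⟩
    have hmono : Antitone (fun n : ℕ => Set.Iic (-(n:ℝ))) := by
      intro m n hmn
      exact Set.Iic_subset_Iic.2 (by exact_mod_cast neg_le_neg (by exact_mod_cast hmn))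
    have := tendsto_measure_iInter_atTop (μ := ν) (fun n => (measurableSet_Iic).nullMeasurableSet) hmono
      ⟨0, measure_ne_top _ _⟩
    rw [hemp] at this
    simp only [measure_empty] at this
    have := this.eventually_lt_const (show (0:ENNReal) < 1/2 by norm_num)
    obtain ⟨n, hn⟩ := this.exists
    rcases h (-(n:ℝ)) with h0 | h1
    · exact ⟨_, h0⟩
    · simp only [Function.comp_apply, h1] at hn; norm_num at hn
  obtain ⟨b, hb1⟩ := hb
  obtain ⟨c, hc0⟩ := hc
  set S : Set ℝ := {x | ν (Set.Iic x) = 1} with hS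
  have hSne : S.Nonempty := ⟨b, hb1⟩
  have hSbdd : BddBelow S := by
    refine ⟨c, fun x hx => ?_⟩
    by_contra hcx
    push_neg at hcx
    have : ν (Set.Iic x) ≤ ν (Set.Iic c) := measure_mono (Set.Iic_subset_Iic.2 hcx.le)
    rw [hx, hc0] at this
    norm_num at this
  set a := sInf S with ha
  refine ⟨a, ?_⟩
  have hIic : ν (Set.Iic a) = 1 := by
    rw [← prob_compl_eq_zero_iff measurableSet_Iic]
    have heq : (Set.Iic a)ᶜ = ⋃ n : ℕ, (Set.Iic (a + 1/(n+1)))ᶜ := by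
      ext x
      simp only [Set.mem_compl_iff, Set.mem_Iic, not_le, Set.mem_iUnion]
      constructor
      · intro hx
        obtain ⟨n, hn⟩ := exists_nat_one_div_lt (show (0:ℝ) < x - a by linarith)
        exact ⟨n, by linarith⟩
      · rintro ⟨n, hn⟩
        have : (0:ℝ) < 1/(n+1) := by positivity
        linarith
    rw [heq]
    refine measure_iUnion_null (fun n => ?_)
    rw [prob_compl_eq_zero_iff measurableSet_Iic]
    have hlt : a < a + 1/(n+1) := by
      have : (0:ℝ) < 1/(n+1) := by positivity
      linarith
    obtain ⟨y, hy, hylt⟩ := (csInf_lt_iff hSbdd hSne).1 hlt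
    have : ν (Set.Iic y) ≤ ν (Set.Iic (a + 1/(n+1))) := measure_mono (Set.Iic_subset_Iic.2 hylt.le)
    rw [hy] at this
    exact le_antisymm prob_le_one this
  have hIio : ν (Set.Iio a) = 0 := by
    have heq : Set.Iio a = ⋃ n : ℕ, Set.Iic (a - 1/(n+1)) := by
      ext x
      simp only [Set.mem_Iio, Set.mem_iUnion, Set.mem_Iic]
      constructor
      · intro hx
        obtain ⟨n, hn⟩ := exists_nat_one_div_lt (show (0:ℝ) < a - x by linarith)
        exact ⟨n, by linarith⟩
      · rintro ⟨n, hn⟩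
        have : (0:ℝ) < 1/(n+1) := by positivity
        linarith
    rw [heq]
    refine measure_iUnion_null (fun n => ?_)
    have hlt : a - 1/(n+1) < a := by
      have : (0:ℝ) < 1/(n+1) := by positivity
      linarith
    rcases h (a - 1/(n+1)) with h0 | h1
    · exact h0
    · exfalso
      have : a ≤ a - 1/(n+1) := csInf_le hSbdd h1
      linarith
  have : ({a} : Set ℝ) = Set.Iic a \ Set.Iio a := by
    ext x
    simp only [Set.mem_singleton_iff, Set.mem_diff, Set.mem_Iic, Set.mem_Iio, not_lt]
    constructor
    · rintro rfl; exact ⟨le_rfl, le_rfl⟩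
    · rintro ⟨h1, h2⟩; exact le_antisymm h1 h2
  rw [this, measure_diff_null hIio, hIic]

theorem iid_expected_max_strict_increase
    {Ω : Type*} [MeasurableSpace Ω] (P : Measure Ω) [IsProbabilityMeasure P]
    (X : ℕ → Ω → ℝ)
    (hmeas : ∀ i, Measurable (X i))
    (hint : ∀ i, Integrable (X i) P)
    (hindep : ProbabilityTheory.iIndepFun X P)
    (hident : ∀ i, Measure.map (X i) P = Measure.map (X 1) P)
    (hnondeg : ¬ ∃ a : ℝ, ∀ᵐ ω ∂P, X 1 ω = a)
    (F : ℝ → ℝ)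
    (hF : ∀ x, F x = (P (X 1 ⁻¹' Set.Iic x)).toReal)
    (μ : ℕ → ℝ)
    (hμ : ∀ k, μ k = ∫ ω, (partialSups (fun i => X (i + 1) ω)) (k - 1) ∂P) :
    ∀ k : ℕ, 1 ≤ k →
      μ (k + 1) - μ k = (∫ x : ℝ, F x ^ k * (1 - F x)) ∧
      0 < μ (k + 1) - μ k := by
  intro k hk
  obtain ⟨m, rfl⟩ : ∃ m, k = m + 1 := ⟨k - 1, by omega⟩
  set M : ℕ → Ω → ℝ := fun n ω => partialSups (fun i => X (i + 1) ω) n with hMdef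
  have hMmeas : ∀ n, Measurable (M n) := fun n => aux_meas_partialSups _ (fun i => hmeas (i+1)) n
  have hMint : ∀ n, Integrable (M n) P :=
    fun n => aux_int_partialSups _ (fun i => hmeas (i+1)) (fun i => hint (i+1)) n
  have hμ1 : μ (m+1) = ∫ ω, M m ω ∂P := by
    rw [hμ (m+1)]; simp [hMdef]
  have hμ2 : μ (m+1+1) = ∫ ω, M (m+1) ω ∂P := by
    rw [hμ (m+1+1)]; simp [hMdef]
  set D : Ω → ℝ := fun ω => M (m+1) ω - M m ω with hDdef
  have hMsucc : ∀ ω, M (m+1) ω = M m ω ⊔ X (m+2) ω := by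
    intro ω; simp [hMdef, partialSups_succ]
  have hDnn : ∀ ω, 0 ≤ D ω := by
    intro ω
    simp only [hDdef, hMsucc ω, sub_nonneg]
    exact le_sup_left
  have hDint : Integrable D P := (hMint (m+1)).sub (hMint m)
  have hdiff : μ (m+1+1) - μ (m+1) = ∫ ω, D ω ∂P := by
    rw [hμ2, hμ1, ← integral_sub (hMint (m+1)) (hMint m)]
  -- the lintegral of D
  set L : ENNReal := ∫⁻ ω, ENNReal.ofReal (D ω) ∂P with hLdef
  have hL : L = ENNReal.ofReal (∫ ω, D ω ∂P) :=
    (ofReal_integral_eq_lintegral_ofReal hDint (Filter.Eventually.of_forall hDnn)).symm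
  have hLfin : L ≠ ⊤ := by rw [hL]; exact ENNReal.ofReal_ne_top
  have hintD_eq : ∫ ω, D ω ∂P = L.toReal := by
    rw [hL, ENNReal.toReal_ofReal (integral_nonneg hDnn)]
  -- D as a volume of an interval
  have hDvol : ∀ ω, ENNReal.ofReal (D ω) = volume (Set.Ico (M m ω) (X (m+2) ω)) := by
    intro ω
    by_cases h : X (m+2) ω ≤ M m ω
    · rw [Set.Ico_eq_empty (by exact fun hlt => absurd h (not_le.2 hlt))]
      have hD0 : D ω = 0 := by
        simp only [hDdef, hMsucc ω, sub_eq_zero]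
        exact sup_eq_left.2 h
      simp [hD0]
    · push_neg at h
      rw [Real.volume_Ico]
      congr 1
      simp only [hDdef, hMsucc ω]
      rw [sup_eq_right.2 h.le]
  -- the product set
  set A : Set (Ω × ℝ) := {p | M m p.1 ≤ p.2} ∩ {p | p.2 < X (m+2) p.1} with hAdef
  have hA : MeasurableSet A :=
    (measurableSet_le ((hMmeas m).comp measurable_fst) measurable_snd).inter
      (measurableSet_lt measurable_snd ((hmeas (m+2)).comp measurable_fst))
  have hslice : ∀ ω, Set.Ico (M m ω) (X (m+2) ω) = {x | (ω, x) ∈ A} := by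
    intro ω; ext x; simp [hAdef, Set.mem_Ico]
  have hL2 : L = ∫⁻ ω, ∫⁻ x, A.indicator (fun _ => (1:ENNReal)) (ω, x) ∂volume ∂P := by
    rw [hLdef]
    refine lintegral_congr (fun ω => ?_)
    rw [hDvol ω]
    have : (fun x => A.indicator (fun _ => (1:ENNReal)) (ω, x))
        = Set.indicator {x | (ω, x) ∈ A} (fun _ => (1:ENNReal)) := by
      ext x
      by_cases hx : (ω, x) ∈ A <;> simp [Set.indicator_apply, hx]
    rw [this, lintegral_indicator_const, hslice ω]
    · rw [one_mul]
    · exact measurable_prodMk_left hA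
  have hswap : L = ∫⁻ x, ∫⁻ ω, A.indicator (fun _ => (1:ENNReal)) (ω, x) ∂P ∂volume := by
    rw [hL2]
    exact lintegral_lintegral_swap ((measurable_const.indicator hA).aemeasurable)
  -- identify inner integral
  have hinner : ∀ x : ℝ, (∫⁻ ω, A.indicator (fun _ => (1:ENNReal)) (ω, x) ∂P)
      = (P (X 1 ⁻¹' Set.Iic x))^(m+1) * P (X 1 ⁻¹' Set.Ioi x) := by
    intro x
    have hsec : ∀ ω, A.indicator (fun _ => (1:ENNReal)) (ω, x)
        = Set.indicator {ω | (ω, x) ∈ A} (fun _ => (1:ENNReal)) ω := by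
      intro ω
      by_cases hx : (ω, x) ∈ A <;> simp [Set.indicator_apply, hx]
    have hsetx : {ω | (ω, x) ∈ A}
        = (⋂ i ∈ Finset.range (m+1), X (i+1) ⁻¹' Set.Iic x) ∩ X (m+2) ⁻¹' Set.Ioi x := by
      ext ω
      simp only [hAdef, Set.mem_setOf_eq, Set.mem_inter_iff, Set.mem_iInter, Set.mem_preimage,
        Set.mem_Iic, Set.mem_Ioi, Finset.mem_range, hMdef]
      rw [partialSups_le_iff]
      constructor
      · rintro ⟨h1, h2⟩
        exact ⟨fun i hi => h1 i (by omega), h2⟩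
      · rintro ⟨h1, h2⟩
        exact ⟨fun i hi => h1 i (by omega), h2⟩
    have hmsx : MeasurableSet {ω | (ω, x) ∈ A} := by
      rw [hsetx]
      refine MeasurableSet.inter ?_ ((hmeas (m+2)) measurableSet_Ioi)
      exact MeasurableSet.biInter (Set.to_countable _)
        (fun i _ => (hmeas (i+1)) measurableSet_Iic)
    calc (∫⁻ ω, A.indicator (fun _ => (1:ENNReal)) (ω, x) ∂P)
        = ∫⁻ ω, Set.indicator {ω | (ω, x) ∈ A} (fun _ => (1:ENNReal)) ω ∂P :=
          lintegral_congr hsec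
      _ = P {ω | (ω, x) ∈ A} := by rw [lintegral_indicator_const hmsx, one_mul]
      _ = (P (X 1 ⁻¹' Set.Iic x))^(m+1) * P (X 1 ⁻¹' Set.Ioi x) := by
          rw [hsetx]; exact aux_key P X hmeas hindep hident (m+1) x
  have hLfinal : L = ∫⁻ x, (P (X 1 ⁻¹' Set.Iic x))^(m+1) * P (X 1 ⁻¹' Set.Ioi x) ∂volume := by
    rw [hswap]; exact lintegral_congr hinner
  -- measurability of the integrand in x
  have hmono : Monotone (fun x : ℝ => P (X 1 ⁻¹' Set.Iic x)) :=
    fun x y hxy => measure_mono (Set.preimage_mono (Set.Iic_subset_Iic.2 hxy))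
  have hanti : Antitone (fun x : ℝ => P (X 1 ⁻¹' Set.Ioi x)) :=
    fun x y hxy => measure_mono (Set.preimage_mono (Set.Ioi_subset_Ioi hxy))
  have hGmeas : Measurable (fun x : ℝ => (P (X 1 ⁻¹' Set.Iic x))^(m+1) * P (X 1 ⁻¹' Set.Ioi x)) :=
    (hmono.measurable.pow_const (m+1)).mul hanti.measurable
  -- toReal of the integrand
  have hIoiReal : ∀ x : ℝ, (P (X 1 ⁻¹' Set.Ioi x)).toReal = 1 - F x := by
    intro x
    have hc : X 1 ⁻¹' Set.Ioi x = (X 1 ⁻¹' Set.Iic x)ᶜ := by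
      rw [← Set.preimage_compl, Set.compl_Iic]
    rw [hc, measure_compl ((hmeas 1) measurableSet_Iic) (measure_ne_top _ _),
      measure_univ, ENNReal.toReal_sub_of_le prob_le_one ENNReal.one_ne_top,
      ENNReal.toReal_one, hF x]
  have htoReal : ∀ x : ℝ,
      ((P (X 1 ⁻¹' Set.Iic x))^(m+1) * P (X 1 ⁻¹' Set.Ioi x)).toReal = F x ^ (m+1) * (1 - F x) := by
    intro x
    rw [ENNReal.toReal_mul, ENNReal.toReal_pow, hIoiReal x, hF x]
  have hbd : ∀ x : ℝ, (P (X 1 ⁻¹' Set.Iic x))^(m+1) * P (X 1 ⁻¹' Set.Ioi x) < ⊤ := by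
    intro x
    refine lt_of_le_of_lt ?_ (show (1:ENNReal) < ⊤ by norm_num)
    exact mul_le_one' (pow_le_one' prob_le_one _) prob_le_one
  have hbochner : ∫ x : ℝ, F x ^ (m+1) * (1 - F x) = L.toReal := by
    rw [hLfinal]
    rw [← integral_toReal hGmeas.aemeasurable (Filter.Eventually.of_forall hbd)]
    exact integral_congr_ae (Filter.Eventually.of_forall (fun x => (htoReal x).symm))
  constructor
  · rw [hdiff, hintD_eq, hbochner]
  -- positivity
  · rw [hdiff]
    rw [integral_pos_iff_support_of_nonneg hDnn hDint]
    -- find x₀ with nondegenerate CDF value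
    have hdich : ¬ ∀ x : ℝ, P (X 1 ⁻¹' Set.Iic x) = 0 ∨ P (X 1 ⁻¹' Set.Iic x) = 1 := by
      intro hall
      set ν : Measure ℝ := Measure.map (X 1) P with hν
      have : IsProbabilityMeasure ν := Measure.isProbabilityMeasure_map (hmeas 1).aemeasurable
      have hall' : ∀ x, ν (Set.Iic x) = 0 ∨ ν (Set.Iic x) = 1 := by
        intro x
        rw [hν, Measure.map_apply (hmeas 1) measurableSet_Iic]
        exact hall x
      obtain ⟨a, ha⟩ := aux_nondeg ν hall'
      refine hnondeg ⟨a, ?_⟩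
      have h1 : P (X 1 ⁻¹' {a}) = 1 := by
        rw [← Measure.map_apply (hmeas 1) (measurableSet_singleton a)]
        exact ha
      have : P ((X 1 ⁻¹' {a})ᶜ) = 0 :=
        (prob_compl_eq_zero_iff ((hmeas 1) (measurableSet_singleton a))).2 h1
      filter_upwards [measure_eq_zero_iff_ae_notMem.1 this] with ω hω
      simpa using hω
    push_neg at hdich
    obtain ⟨x₀, hx0, hx1⟩ := hdich
    set E : Set Ω := (⋂ i ∈ Finset.range (m+1), X (i+1) ⁻¹' Set.Iic x₀) ∩ X (m+2) ⁻¹' Set.Ioi x₀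
      with hEdef
    have hPE : P E = (P (X 1 ⁻¹' Set.Iic x₀))^(m+1) * P (X 1 ⁻¹' Set.Ioi x₀) :=
      aux_key P X hmeas hindep hident (m+1) x₀
    have hPEne : P E ≠ 0 := by
      rw [hPE]
      refine mul_ne_zero (pow_ne_zero _ hx0) ?_
      have hc : X 1 ⁻¹' Set.Ioi x₀ = (X 1 ⁻¹' Set.Iic x₀)ᶜ := by
        rw [← Set.preimage_compl, Set.compl_Iic]
      rw [hc]
      intro h0
      exact hx1 ((prob_compl_eq_zero_iff ((hmeas 1) measurableSet_Iic)).1 h0)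
    have hEsub : E ⊆ Function.support D := by
      intro ω hω
      rw [hEdef, Set.mem_inter_iff, Set.mem_iInter] at hω
      obtain ⟨h1, h2⟩ := hω
      have hMle : M m ω ≤ x₀ := by
        simp only [hMdef]
        rw [partialSups_le_iff]
        intro i hi
        have := h1 i
        rw [Set.mem_iInter] at this
        exact this (Finset.mem_range.2 (by omega))
      have hXgt : x₀ < X (m+2) ω := h2
      have : 0 < D ω := by
        simp only [hDdef, hMsucc ω, sub_pos]
        exact lt_of_le_of_lt (le_of_eq rfl) (lt_of_le_of_lt hMle hXgt) |>.trans_le le_sup_right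
      exact ne_of_gt this
    calc (0:ENNReal) < P E := by
          exact lt_of_le_of_ne zero_le (Ne.symm hPEne)
      _ ≤ P (Function.support D) := measure_mono hEsub
end

section
/- Let μ : ℕ → ℝ be strictly increasing with nonincreasing increments, and ΔV_n(c) := ∑_{k=c+1}^{n-1} μ_k/(k(k-1)) - μ_c/c + μ_1/(n-1). For each fixed c, ΔV_n(c) ≥ (μ_{c+1} - μ_c)/(c+1) - (μ_{c+1} - μ_1)/(n-1); consequently ΔV_n(c) > 0 for all sufficiently large n, and therefore c_*(n) := min{c : ΔV_n(c) ≤ 0} tends to infinity as n → ∞. -/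
open Filter in
theorem threshold_diverges (μ : ℕ → ℝ)
    (hstrict : ∀ k, 1 ≤ k → μ k < μ (k + 1))
    (hconc : ∀ k, 1 ≤ k → μ (k + 2) - μ (k + 1) ≤ μ (k + 1) - μ k)
    (ΔV : ℕ → ℕ → ℝ)
    (hΔV : ∀ n c, ΔV n c = (∑ k ∈ Finset.Icc (c + 1) (n - 1), μ k / ((k : ℝ) * ((k : ℝ) - 1)))
        - μ c / c + μ 1 / ((n : ℝ) - 1))
    (cstar : ℕ → ℕ)
    (hcstar : ∀ n, cstar n = sInf {c : ℕ | 1 ≤ c ∧ ΔV n c ≤ 0}) :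
    (∀ c n : ℕ, 1 ≤ c → c + 2 ≤ n →
        ΔV n c ≥ (μ (c + 1) - μ c) / ((c : ℝ) + 1) - (μ (c + 1) - μ 1) / ((n : ℝ) - 1)) ∧
    (∀ c : ℕ, 1 ≤ c → ∃ N : ℕ, ∀ n ≥ N, 0 < ΔV n c) ∧
    Tendsto cstar atTop atTop := by
  -- monotonicity of μ on [1, ∞)
  have hmono : ∀ a b : ℕ, 1 ≤ a → a ≤ b → μ a ≤ μ b := by
    intro a b ha hab
    induction hab with
    | refl => exact le_rfl
    | @step m hm ih => exact ih.trans (hstrict m (le_trans ha hm)).le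
  -- telescoping lower bound for the sum
  have hsum : ∀ c : ℕ, 1 ≤ c → ∀ m : ℕ, c ≤ m →
      μ (c + 1) * (1 / (c : ℝ) - 1 / (m : ℝ)) ≤
        ∑ k ∈ Finset.Icc (c + 1) m, μ k / ((k : ℝ) * ((k : ℝ) - 1)) := by
    intro c hc m hm
    induction m, hm using Nat.le_induction with
    | base =>
      rw [Finset.Icc_eq_empty (by omega), Finset.sum_empty, sub_self, mul_zero]
    | succ m hm ih =>
      rw [Finset.sum_Icc_succ_top (by omega : c + 1 ≤ m + 1)]
      have hm0 : (0 : ℝ) < m := by exact_mod_cast (by omega : 0 < m)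
      have hc0 : (0 : ℝ) < c := by exact_mod_cast hc
      have hμ : μ (c + 1) ≤ μ (m + 1) := hmono (c + 1) (m + 1) (by omega) (by omega)
      have hsplit : μ (c + 1) * (1 / (c : ℝ) - 1 / ((m : ℝ) + 1)) =
          μ (c + 1) * (1 / (c : ℝ) - 1 / (m : ℝ)) +
          μ (c + 1) / (((m : ℝ) + 1) * (m : ℝ)) := by
        field_simp
        ring
      have hcast : ((m + 1 : ℕ) : ℝ) = (m : ℝ) + 1 := by push_cast; ring
      rw [hcast, hsplit]
      have hterm : μ (c + 1) / (((m : ℝ) + 1) * (m : ℝ)) ≤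
          μ (m + 1) / (((m : ℝ) + 1) * ((m : ℝ) + 1 - 1)) := by
        have : (m : ℝ) + 1 - 1 = (m : ℝ) := by ring
        rw [this]
        gcongr
      linarith
  -- Part 1
  have part1 : ∀ c n : ℕ, 1 ≤ c → c + 2 ≤ n →
      ΔV n c ≥ (μ (c + 1) - μ c) / ((c : ℝ) + 1) - (μ (c + 1) - μ 1) / ((n : ℝ) - 1) := by
    intro c n hc hn
    rw [hΔV]
    have hcast : ((n - 1 : ℕ) : ℝ) = (n : ℝ) - 1 := by
      have h1 : 1 ≤ n := by omega
      push_cast [h1]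
      ring
    have hs := hsum c hc (n - 1) (by omega)
    rw [hcast] at hs
    have hc0 : (0 : ℝ) < c := by exact_mod_cast hc
    have hn1 : (0 : ℝ) < (n : ℝ) - 1 := by
      have : (2 : ℝ) ≤ (n : ℝ) := by exact_mod_cast (by omega : 2 ≤ n)
      linarith
    have hdiff : 0 < μ (c + 1) - μ c := sub_pos.2 (hstrict c hc)
    have key : μ (c + 1) * (1 / (c : ℝ) - 1 / ((n : ℝ) - 1)) - μ c / c + μ 1 / ((n : ℝ) - 1)
        = (μ (c + 1) - μ c) / (c : ℝ) - (μ (c + 1) - μ 1) / ((n : ℝ) - 1) := by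
      field_simp
      ring
    have h2 : (μ (c + 1) - μ c) / ((c : ℝ) + 1) ≤ (μ (c + 1) - μ c) / (c : ℝ) := by
      gcongr <;> linarith
    linarith
  -- Part 2
  have part2 : ∀ c : ℕ, 1 ≤ c → ∃ N : ℕ, ∀ n ≥ N, 0 < ΔV n c := by
    intro c hc
    set ε := (μ (c + 1) - μ c) / ((c : ℝ) + 1) with hε
    have hεpos : 0 < ε := div_pos (sub_pos.2 (hstrict c hc)) (by positivity)
    set A := μ (c + 1) - μ 1 with hA
    have hAnn : 0 ≤ A := sub_nonneg.2 (hmono 1 (c + 1) le_rfl (by omega))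
    obtain ⟨N₀, hN₀⟩ := exists_nat_gt (A / ε + 1)
    refine ⟨max (c + 2) N₀, fun n hn => ?_⟩
    have hn1 : c + 2 ≤ n := le_trans (le_max_left _ _) hn
    have hn2 : (N₀ : ℝ) ≤ (n : ℝ) := by exact_mod_cast le_trans (le_max_right _ _) hn
    have h1 := part1 c n hc hn1
    have hn1pos : (0 : ℝ) < (n : ℝ) - 1 := by
      have : (2 : ℝ) ≤ (n : ℝ) := by exact_mod_cast (by omega : 2 ≤ n)
      linarith
    have hlt : A / ((n : ℝ) - 1) < ε := by
      rw [div_lt_iff₀ hn1pos]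
      have h3 : A / ε < (n : ℝ) - 1 := by linarith
      calc A = ε * (A / ε) := by field_simp
        _ < ε * ((n : ℝ) - 1) := by exact mul_lt_mul_of_pos_left h3 hεpos
    linarith
  -- uniform version over an initial segment
  have hrange : ∀ M : ℕ, ∃ N : ℕ, ∀ n ≥ N, ∀ c : ℕ, 1 ≤ c → c ≤ M → 0 < ΔV n c := by
    intro M
    induction M with
    | zero => exact ⟨0, fun n _ c hc hcM => absurd (hc.trans hcM) (by omega)⟩
    | succ M ih =>
      obtain ⟨N₁, hN₁⟩ := ih
      obtain ⟨N₂, hN₂⟩ := part2 (M + 1) (by omega)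
      refine ⟨max N₁ N₂, fun n hn c hc hcM => ?_⟩
      rcases (by omega : c ≤ M ∨ c = M + 1) with h | h
      · exact hN₁ n (le_trans (le_max_left _ _) hn) c hc h
      · subst h; exact hN₂ n (le_trans (le_max_right _ _) hn)
  -- n - 1 is always in the set for n ≥ 2
  have hmem : ∀ n : ℕ, 2 ≤ n → ΔV n (n - 1) ≤ 0 := by
    intro n hn
    rw [hΔV]
    rw [Finset.Icc_eq_empty (by omega), Finset.sum_empty]
    have hcast : ((n - 1 : ℕ) : ℝ) = (n : ℝ) - 1 := by
      have h1 : 1 ≤ n := by omega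
      push_cast [h1]
      ring
    rw [hcast]
    have hn1 : (0 : ℝ) < (n : ℝ) - 1 := by
      have : (2 : ℝ) ≤ (n : ℝ) := by exact_mod_cast hn
      linarith
    have hμ : μ 1 ≤ μ (n - 1) := hmono 1 (n - 1) le_rfl (by omega)
    have := (div_le_div_iff_of_pos_right hn1).2 hμ
    linarith
  refine ⟨part1, part2, ?_⟩
  rw [tendsto_atTop_atTop]
  intro M
  obtain ⟨N, hN⟩ := hrange M
  refine ⟨max N 2, fun n hn => ?_⟩
  have hn2 : 2 ≤ n := le_trans (le_max_right _ _) hn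
  have hnN : N ≤ n := le_trans (le_max_left _ _) hn
  have hne : {c : ℕ | 1 ≤ c ∧ ΔV n c ≤ 0}.Nonempty :=
    ⟨n - 1, ⟨by omega, hmem n hn2⟩⟩
  have hmemInf := Nat.sInf_mem hne
  simp only [Set.mem_setOf_eq] at hmemInf
  rw [hcstar]
  by_contra h
  push_neg at h
  exact absurd hmemInf.2 (not_le.2 (hN n hnN _ hmemInf.1 (by omega)))
end

section
/- For the exponential case, the optimal threshold index c_*(n) := min{c ≥ 1 : 1/c - 1/n + 1/(n-1) - H_{n-1}/(n-1) ≤ 0} satisfies ⌊(n-1)/H_{n-1}⌋ < c_*(n) + 1 and c_*(n) < ⌈n/H_n⌉ + 1, where H_m = ∑_{i=1}^m 1/i; in particular c_*(n)·H_n / n → 1 as n → ∞, i.e., c_*(n) ~ n/log n. -/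
open Filter in
theorem exponential_threshold_asymptotics (H : ℕ → ℝ)
    (hH : ∀ m, H m = ∑ i ∈ Finset.Icc 1 m, (1 : ℝ) / i)
    (cstar : ℕ → ℕ)
    (hcstar : ∀ n, cstar n = sInf {c : ℕ | 1 ≤ c ∧
        1 / (c : ℝ) - 1 / n + 1 / ((n : ℝ) - 1) - H (n - 1) / ((n : ℝ) - 1) ≤ 0}) :
    (∀ n : ℕ, 3 ≤ n →
        Nat.floor (((n : ℝ) - 1) / H (n - 1)) < cstar n + 1 ∧
        cstar n < Nat.ceil ((n : ℝ) / H n) + 1) ∧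
    Tendsto (fun n : ℕ => (cstar n : ℝ) * H n / n) atTop (nhds 1) := by
  -- H as range sum
  have hHr : ∀ m, H m = ∑ i ∈ Finset.range m, (1 : ℝ) / (i + 1) := by
    intro m
    rw [hH]
    induction m with
    | zero => simp
    | succ k ih =>
      rw [Finset.sum_Icc_succ_top (by omega), ih, Finset.sum_range_succ]
      push_cast
      ring
  have hrec : ∀ m : ℕ, H (m + 1) = H m + 1 / (m + 1) := by
    intro m
    rw [hHr, hHr, Finset.sum_range_succ]
  have hone : ∀ m : ℕ, 1 ≤ m → 1 ≤ H m := by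
    intro m hm
    rw [hHr]
    calc (1:ℝ) = ∑ i ∈ Finset.range 1, (1:ℝ)/(i+1) := by simp
    _ ≤ _ := Finset.sum_le_sum_of_subset_of_nonneg
        (Finset.range_subset_range.2 hm) (by intros; positivity)
  have hmono : ∀ a b : ℕ, a ≤ b → H a ≤ H b := by
    intro a b hab
    rw [hHr, hHr]
    exact Finset.sum_le_sum_of_subset_of_nonneg
        (Finset.range_subset_range.2 hab) (by intros; positivity)
  have h2 : H 2 = 3/2 := by
    rw [hHr]; norm_num [Finset.sum_range_succ]
  have h3 : H 3 = 11/6 := by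
    rw [hHr]; norm_num [Finset.sum_range_succ]
  -- H k ≥ 2 - 1/(k+1) for k ≥ 3
  have hbig : ∀ k : ℕ, 3 ≤ k → 2 - 1 / ((k:ℝ) + 1) ≤ H k := by
    intro k hk
    induction k, hk using Nat.le_induction with
    | base => rw [h3]; norm_num
    | succ k hk ih =>
      rw [hrec]
      have h1 : (0:ℝ) < (k:ℝ) + 1 := by positivity
      have h2 : (0:ℝ) < (k:ℝ) + 1 + 1 := by positivity
      have hb : (0:ℝ) < 1 / ((k:ℝ) + 1 + 1) := by positivity
      push_cast
      linarith
  -- membership of ⌈n/H n⌉ in the set, for n ≥ 3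
  have hmem : ∀ n : ℕ, 3 ≤ n → (⌈(n : ℝ) / H n⌉₊ : ℕ) ∈ {c : ℕ | 1 ≤ c ∧
      1 / (c : ℝ) - 1 / n + 1 / ((n : ℝ) - 1) - H (n - 1) / ((n : ℝ) - 1) ≤ 0} := by
    intro n hn
    have hn0 : (0:ℝ) < n := by positivity
    have hHn : (1:ℝ) ≤ H n := hone n (by omega)
    have hHnpos : (0:ℝ) < H n := by linarith
    have hq : (0:ℝ) < (n:ℝ) / H n := by positivity
    have hc1 : 1 ≤ ⌈(n : ℝ) / H n⌉₊ := Nat.one_le_ceil_iff.2 hq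
    refine ⟨hc1, ?_⟩
    have hcge : (n : ℝ) / H n ≤ (⌈(n : ℝ) / H n⌉₊ : ℝ) := Nat.le_ceil _
    have hcpos : (0:ℝ) < (⌈(n : ℝ) / H n⌉₊ : ℝ) := by exact_mod_cast hc1
    have hstep1 : 1 / (⌈(n : ℝ) / H n⌉₊ : ℝ) ≤ H n / n := by
      rw [div_le_div_iff₀ hcpos hn0, one_mul]
      rw [div_le_iff₀ hHnpos] at hcge
      linarith [hcge]
    rcases eq_or_lt_of_le hn with heq | hlt
    · -- n = 3
      have : n = 3 := heq.symm
      subst this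
      have hv : (((3:ℕ)) : ℝ) / H 3 = 18/11 := by rw [h3]; norm_num
      have hceil : ⌈(((3:ℕ)) : ℝ) / H 3⌉₊ = 2 := by
        rw [hv, Nat.ceil_eq_iff (by norm_num)]; norm_num
      rw [hceil]
      norm_num [show (3:ℕ)-1 = 2 from rfl, h2]
    · -- n ≥ 4
      have hn4 : 4 ≤ n := hlt
      have hm3 : 3 ≤ n - 1 := by omega
      have hmcast : ((n - 1 : ℕ) : ℝ) = (n : ℝ) - 1 := by
        have : (1:ℕ) ≤ n := by omega
        push_cast [this]; ring
      set m := n - 1 with hmdef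
      have hnm : n = m + 1 := by omega
      have hHnm : H n = H m + 1 / n := by
        rw [hnm, hrec]; congr 1; push_cast [hnm]; ring
      have hHm : 2 - 1 / (n:ℝ) ≤ H m := by
        have := hbig m hm3
        have : 2 - 1/((m:ℝ)+1) ≤ H m := this
        have hcast : ((m:ℝ)+1) = (n:ℝ) := by push_cast [hnm]; ring
        rwa [hcast] at this
      -- suffices: H n / n - 1/n + 1/(n-1) - H m /(n-1) ≤ 0
      have hmpos : (0:ℝ) < (n:ℝ) - 1 := by
        have : (4:ℝ) ≤ n := by exact_mod_cast hn4
        linarith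
      have key : H n / n - 1 / n + 1 / ((n:ℝ) - 1) - H m / ((n:ℝ) - 1) ≤ 0 := by
        rw [hHnm]
        have hexp : (H m + 1 / n) / n - 1 / n + 1 / ((n:ℝ) - 1) - H m / ((n:ℝ) - 1)
            = ((n:ℝ) + ((n:ℝ) - 1) - (n:ℝ) * H m) / ((n:ℝ)^2 * ((n:ℝ) - 1)) := by
          field_simp
          ring
        rw [hexp]
        apply div_nonpos_of_nonpos_of_nonneg
        · have hmul := mul_le_mul_of_nonneg_left hHm hn0.le
          have hinv : (n:ℝ) * (1/n) = 1 := by field_simp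
          nlinarith [hmul, hinv]
        · positivity
      calc 1 / (⌈(n : ℝ) / H n⌉₊ : ℝ) - 1 / n + 1 / ((n : ℝ) - 1) - H m / ((n : ℝ) - 1)
          ≤ H n / n - 1 / n + 1 / ((n : ℝ) - 1) - H m / ((n : ℝ) - 1) := by linarith [hstep1]
        _ ≤ 0 := key
  -- part 1
  have hpart1 : ∀ n : ℕ, 3 ≤ n →
      Nat.floor (((n : ℝ) - 1) / H (n - 1)) < cstar n + 1 ∧
      cstar n < Nat.ceil ((n : ℝ) / H n) + 1 := by
    intro n hn
    have hne : {c : ℕ | 1 ≤ c ∧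
        1 / (c : ℝ) - 1 / n + 1 / ((n : ℝ) - 1) - H (n - 1) / ((n : ℝ) - 1) ≤ 0}.Nonempty :=
      ⟨_, hmem n hn⟩
    have hcs_mem := hcstar n ▸ Nat.sInf_mem hne
    obtain ⟨hcs1, hcs2⟩ := hcs_mem
    have hub : cstar n ≤ ⌈(n : ℝ) / H n⌉₊ := by
      rw [hcstar n]; exact Nat.sInf_le (hmem n hn)
    constructor
    · -- floor bound
      have hn0 : (0:ℝ) < n := by positivity
      have hmpos : (0:ℝ) < (n:ℝ) - 1 := by
        have : (3:ℝ) ≤ n := by exact_mod_cast hn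
        linarith
      have hHm1 : (1:ℝ) ≤ H (n - 1) := hone _ (by omega)
      have hHmpos : (0:ℝ) < H (n - 1) := by linarith
      have hcpos : (0:ℝ) < (cstar n : ℝ) := by exact_mod_cast hcs1
      have h1n : 1 / (n:ℝ) ≤ 1 / ((n:ℝ) - 1) := by
        apply one_div_le_one_div_of_le hmpos; linarith
      have hkey : 1 / (cstar n : ℝ) ≤ H (n - 1) / ((n:ℝ) - 1) := by linarith
      have : ((n:ℝ) - 1) / H (n - 1) ≤ (cstar n : ℝ) := by
        rw [div_le_iff₀ hHmpos]
        rw [div_le_div_iff₀ hcpos hmpos, one_mul] at hkey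
        linarith
      have := Nat.floor_le_floor this
      rw [Nat.floor_natCast] at this
      omega
    · omega
  refine ⟨hpart1, ?_⟩
  -- limits
  have hHdiv : Tendsto (fun n : ℕ => H n / n) atTop (nhds 0) := by
    have h0 : Tendsto (fun i : ℕ => (1:ℝ) / (i + 1)) atTop (nhds 0) := by
      have := (tendsto_one_div_atTop_nhds_zero_nat : Tendsto (fun n : ℕ => 1 / (n : ℝ)) atTop (nhds 0)).comp (tendsto_add_atTop_nat 1)
      apply this.congr
      intro n
      simp [Function.comp]
    have := h0.cesaro
    apply this.congr
    intro n
    rw [← hHr]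
    rw [inv_mul_eq_div]
  have hlow : Tendsto (fun n : ℕ => 1 - 1 / (n:ℝ)) atTop (nhds 1) := by
    simpa using tendsto_const_nhds.sub (tendsto_one_div_atTop_nhds_zero_nat : Tendsto (fun n : ℕ => 1 / (n : ℝ)) atTop (nhds 0))
  have hupp : Tendsto (fun n : ℕ => 1 + H n / n) atTop (nhds 1) := by
    simpa using tendsto_const_nhds.add hHdiv
  apply tendsto_of_tendsto_of_tendsto_of_le_of_le' hlow hupp
  · -- lower bound eventually
    filter_upwards [eventually_ge_atTop 3] with n hn
    have hn0 : (0:ℝ) < n := by positivity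
    have hmpos : (0:ℝ) < (n:ℝ) - 1 := by
      have : (3:ℝ) ≤ n := by exact_mod_cast hn
      linarith
    have hHm1 : (1:ℝ) ≤ H (n - 1) := hone _ (by omega)
    have hHmpos : (0:ℝ) < H (n - 1) := by linarith
    have hne : {c : ℕ | 1 ≤ c ∧
        1 / (c : ℝ) - 1 / n + 1 / ((n : ℝ) - 1) - H (n - 1) / ((n : ℝ) - 1) ≤ 0}.Nonempty :=
      ⟨_, hmem n hn⟩
    obtain ⟨hcs1, hcs2⟩ := hcstar n ▸ Nat.sInf_mem hne
    have hcpos : (0:ℝ) < (cstar n : ℝ) := by exact_mod_cast hcs1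
    have h1n : 1 / (n:ℝ) ≤ 1 / ((n:ℝ) - 1) := by
      apply one_div_le_one_div_of_le hmpos; linarith
    have hkey : 1 / (cstar n : ℝ) ≤ H (n - 1) / ((n:ℝ) - 1) := by linarith
    have hcge : ((n:ℝ) - 1) / H (n - 1) ≤ (cstar n : ℝ) := by
      rw [div_le_iff₀ hHmpos]
      rw [div_le_div_iff₀ hcpos hmpos, one_mul] at hkey
      linarith
    have hHnm : H (n - 1) ≤ H n := hmono _ _ (by omega)
    have hmul : (n:ℝ) - 1 ≤ (cstar n : ℝ) * H n := by
      calc (n:ℝ) - 1 = (((n:ℝ) - 1) / H (n-1)) * H (n-1) := by field_simp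
        _ ≤ (cstar n : ℝ) * H (n-1) := by
            apply mul_le_mul_of_nonneg_right hcge (le_of_lt hHmpos)
        _ ≤ (cstar n : ℝ) * H n := by
            apply mul_le_mul_of_nonneg_left hHnm (le_of_lt hcpos)
    rw [le_div_iff₀ hn0]
    have hinv : (n:ℝ) * (1/n) = 1 := by field_simp
    nlinarith [hmul, hinv]
  · -- upper bound eventually
    filter_upwards [eventually_ge_atTop 3] with n hn
    have hn0 : (0:ℝ) < n := by positivity
    have hHn1 : (1:ℝ) ≤ H n := hone _ (by omega)
    have hHnpos : (0:ℝ) < H n := by linarith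
    have hub : cstar n ≤ ⌈(n : ℝ) / H n⌉₊ := by
      rw [hcstar n]; exact Nat.sInf_le (hmem n hn)
    have hceil : (⌈(n : ℝ) / H n⌉₊ : ℝ) < (n:ℝ) / H n + 1 := Nat.ceil_lt_add_one (by positivity)
    have hc : (cstar n : ℝ) ≤ (n:ℝ) / H n + 1 := by
      calc (cstar n : ℝ) ≤ (⌈(n : ℝ) / H n⌉₊ : ℝ) := by exact_mod_cast hub
        _ ≤ _ := le_of_lt hceil
    have : (cstar n : ℝ) * H n ≤ ((n:ℝ) / H n + 1) * H n := by
      apply mul_le_mul_of_nonneg_right hc (le_of_lt hHnpos)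
    rw [div_le_iff₀ hn0]
    calc (cstar n : ℝ) * H n ≤ ((n:ℝ) / H n + 1) * H n := this
      _ = (n:ℝ) + H n := by field_simp
      _ ≤ (1 + H n / n) * n := by field_simp; exact le_rfl
end
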